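/- Let G=(V,E) be a finite simple graph without isolated vertices and let T₁, …, T_s be the maximal tubings of G. For each i set σ_i = conv{ z_t : t ∈ T_i }. Then {σ₁, …, σ_s} is a triangulation of the dual cosmological polytope C_G°: each σ_i is a simplex of dimension |V|+|E|−1 (the |V|+|E| points z_t, t ∈ T_i, are affinely independent), the union of the σ_i equals C_G°, and for all i, j the intersection σ_i ∩ σ_j equals conv{ z_t : t ∈ T_i ∩ T_j } and is a common face of σ_i and σ_j. -/

import Mathlib

set_option linter.unusedSectionVars false
set_option linter.unusedVariables false

open Finset

variable {V : Type} [Fintype V] [DecidableEq V]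

/-- A tube of the graph on vertex type `V` with edge set `E`: a nonempty connected
(not necessarily induced) subgraph, recorded by its vertex set and edge set.
(The field `verts_in` records that all vertices of a tube are vertices of the graph,
where, the graph having no isolated vertices, its vertex set is the set of endpoints of `E`.) -/
structure Tube (E : Finset (Sym2 V)) where
  verts : Finset V
  edges : Finset (Sym2 V)
  nonempty : verts.Nonempty
  edges_sub : edges ⊆ E
  verts_in : ∀ v ∈ verts, ∃ e ∈ E, v ∈ e
  endpoints_mem : ∀ e ∈ edges, ∀ v ∈ e, v ∈ verts
  conn : ∀ u ∈ verts, ∀ w ∈ verts,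
    Relation.ReflTransGen (fun a b => s(a, b) ∈ edges) u w

theorem Tube.ext' {E : Finset (Sym2 V)} {a b : Tube E}
    (h1 : a.verts = b.verts) (h2 : a.edges = b.edges) : a = b := by
  cases a; cases b; subst h1; subst h2; rfl

instance {E : Finset (Sym2 V)} : DecidableEq (Tube E) := fun a b =>
  decidable_of_iff (a.verts = b.verts ∧ a.edges = b.edges)
    ⟨fun h => Tube.ext' h.1 h.2, fun h => by subst h; exact ⟨rfl, rfl⟩⟩

noncomputable instance {E : Finset (Sym2 V)} : Fintype (Tube E) :=
  Fintype.ofInjective (fun t => (t.verts, t.edges))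
    (fun a b h => Tube.ext' (congrArg Prod.fst h) (congrArg Prod.snd h))

/-- The coordinates of the ambient space `ℝ^(V ⊔ E)`. -/
abbrev Coord (E : Finset (Sym2 V)) := V ⊕ {e : Sym2 V // e ∈ E}

/-- The standard inner product on `ℝ^(V ⊔ E)`. -/
def dot {E : Finset (Sym2 V)} (x y : Coord E → ℝ) : ℝ := ∑ i, x i * y i

/-- The facet normal `h_t = Σ_{v ∈ V(t)} x_v + Σ_{e ∈ E∖E(t)} |e ∩ V(t)|·y_e`. -/
def hvec {E : Finset (Sym2 V)} (t : Tube E) : Coord E → ℝ := fun i =>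
  match i with
  | Sum.inl v => if v ∈ t.verts then 1 else 0
  | Sum.inr e => if e.1 ∈ t.edges then 0
      else ((t.verts.filter (fun v => v ∈ e.1)).card : ℝ)

/-- `|h_t|₁`, the sum of the coordinates of `h_t`. -/
def ell {E : Finset (Sym2 V)} (t : Tube E) : ℝ := ∑ i, hvec t i

/-- `z_t = h_t / |h_t|₁`. -/
noncomputable def zvec {E : Finset (Sym2 V)} (t : Tube E) : Coord E → ℝ := (ell t)⁻¹ • hvec t

/-- The vertices `p_e, p_{e,v}, p_{e,w}` of the cosmological polytope (note that
`p_{e,w}` is obtained from `p_{e,v}` by exchanging the roles of `v` and `w`). -/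
def cosmoVerts (E : Finset (Sym2 V)) : Set (Coord E → ℝ) :=
  {q | ∃ (v w : V) (he : s(v, w) ∈ E),
      q = Pi.single (Sum.inl v) 1 + Pi.single (Sum.inl w) 1
            - Pi.single (Sum.inr ⟨s(v, w), he⟩) 1 ∨
      q = Pi.single (Sum.inl v) 1 - Pi.single (Sum.inl w) 1
            + Pi.single (Sum.inr ⟨s(v, w), he⟩) 1}

/-- The cosmological polytope `C_G`. -/
def cosmo (E : Finset (Sym2 V)) : Set (Coord E → ℝ) := convexHull ℝ (cosmoVerts E)

/-- The dual cosmological polytope `C_G° = conv{ z_t : t a tube }`. -/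
def dualCosmo (E : Finset (Sym2 V)) : Set (Coord E → ℝ) :=
  convexHull ℝ {z | ∃ t : Tube E, z = zvec t}

/-- The affine hyperplane `H` of points whose coordinates sum to `1`. -/
def hyperplaneH (E : Finset (Sym2 V)) : Set (Coord E → ℝ) := {z | ∑ i, z i = 1}

/-- A tubing: a set of tubes, pairwise disjoint or nested. -/
def IsTubing (E : Finset (Sym2 V)) (T : Finset (Tube E)) : Prop :=
  ∀ t₁ ∈ T, ∀ t₂ ∈ T,
    Disjoint t₁.verts t₂.verts ∨ t₁.edges ⊆ t₂.edges ∨ t₂.edges ⊆ t₁.edges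

/-- A maximal tubing: a tubing maximal under inclusion. -/
def IsMaxTubing (E : Finset (Sym2 V)) (T : Finset (Tube E)) : Prop :=
  IsTubing E T ∧ ∀ T' : Finset (Tube E), IsTubing E T' → T ⊆ T' → T' = T

/-- `F` is a face of the polytope `P`: `P` itself, `∅`, or the intersection of `P`
with a supporting hyperplane. -/
def IsFace {E : Finset (Sym2 V)} (F P : Set (Coord E → ℝ)) : Prop :=
  F = P ∨ F = ∅ ∨
    ∃ (a : Coord E → ℝ) (c : ℝ), (∀ x ∈ P, c ≤ dot a x) ∧ F = {x | x ∈ P ∧ dot a x = c}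

section Aux
variable {E : Finset (Sym2 V)}

lemma sym2_exists_mem (f : Sym2 V) : ∃ u, u ∈ f := by
  induction f with
  | _ x y => exact ⟨x, by simp⟩

/-- Two distinct members of a `Sym2` determine it. -/
lemma sym2_eq_of_mem {u w : V} {f : Sym2 V} (hu : u ∈ f) (hw : w ∈ f) (hne : u ≠ w) :
    f = s(u, w) := by
  induction f with
  | _ x y =>
    rw [Sym2.mem_iff] at hu hw
    rcases hu with rfl | rfl <;> rcases hw with rfl | rfl
    · exact absurd rfl hne
    · rfl
    · exact Sym2.eq_swap
    · exact absurd rfl hne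

lemma exists_ne_of_mem_E (hE : ∀ e ∈ E, ¬ e.IsDiag) {e : Sym2 V} (he : e ∈ E) :
    ∃ u w : V, u ≠ w ∧ e = s(u, w) := by
  induction e with
  | _ x y =>
    refine ⟨x, y, ?_, rfl⟩
    intro h; exact hE _ he (by simp [h, Sym2.isDiag_iff_proj_eq])

/-- A tube with no edges is a single vertex. -/
lemma Tube.verts_eq_singleton (t : Tube E) (h : t.edges = ∅) : ∃ v, t.verts = {v} := by
  obtain ⟨v, hv⟩ := t.nonempty
  refine ⟨v, Finset.eq_singleton_iff_unique_mem.2 ⟨hv, fun u hu => ?_⟩⟩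
  have hc := t.conn u hu v hv
  rw [h] at hc
  induction hc with
  | refl => rfl
  | tail _ hst _ => simp at hst

/-- In a tube with at least one edge, the vertices are exactly the endpoints of the edges. -/
lemma Tube.mem_verts_iff (t : Tube E) (h : t.edges.Nonempty) {v : V} :
    v ∈ t.verts ↔ ∃ f ∈ t.edges, v ∈ f := by
  constructor
  · intro hv
    obtain ⟨f₀, hf₀⟩ := h
    obtain ⟨a, ha⟩ := sym2_exists_mem f₀
    have ha' : a ∈ t.verts := t.endpoints_mem f₀ hf₀ _ ha
    have hconn := t.conn v hv a ha'
    rcases Relation.ReflTransGen.cases_head hconn with rfl | ⟨c, hc, _⟩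
    · exact ⟨f₀, hf₀, ha⟩
    · exact ⟨s(v, c), hc, by simp⟩
  · rintro ⟨f, hf, hvf⟩
    exact t.endpoints_mem f hf v hvf

/-- Edge-tubes are determined by their edge sets. -/
lemma Tube.eq_of_edges_eq {t s : Tube E} (hne : t.edges.Nonempty) (h : t.edges = s.edges) :
    t = s := by
  have hs : s.edges.Nonempty := h ▸ hne
  refine Tube.ext' ?_ h
  ext v
  rw [Tube.mem_verts_iff t hne, Tube.mem_verts_iff s hs, h]

lemma Tube.verts_subset_of_edges_subset {t s : Tube E} (hne : t.edges.Nonempty)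
    (h : t.edges ⊆ s.edges) : t.verts ⊆ s.verts := by
  intro v hv
  obtain ⟨f, hf, hvf⟩ := (Tube.mem_verts_iff t hne).1 hv
  exact s.endpoints_mem f (h hf) v hvf

/-- Adjacency of edges within an edge set: both belong and they share a vertex. -/
def adjE (A : Finset (Sym2 V)) (a b : Sym2 V) : Prop :=
  a ∈ A ∧ b ∈ A ∧ ∃ v : V, v ∈ a ∧ v ∈ b

lemma adjE_symm {A : Finset (Sym2 V)} {a b : Sym2 V} (h : adjE A a b) : adjE A b a :=
  ⟨h.2.1, h.1, h.2.2.imp fun _ hv => ⟨hv.2, hv.1⟩⟩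

lemma adjE_mono {A B : Finset (Sym2 V)} (hAB : A ⊆ B) {a b : Sym2 V} (h : adjE A a b) :
    adjE B a b := ⟨hAB h.1, hAB h.2.1, h.2.2⟩

/-- An edge set is (edge-)connected. -/
def ConnE (A : Finset (Sym2 V)) : Prop :=
  ∀ f ∈ A, ∀ f' ∈ A, Relation.ReflTransGen (adjE A) f f'

/-- The edge set of any tube is edge-connected. -/
lemma Tube.connE (t : Tube E) : ConnE t.edges := by
  have key : ∀ u w : V, Relation.ReflTransGen (fun a b => s(a, b) ∈ t.edges) u w →
      ∀ f ∈ t.edges, u ∈ f → ∀ g ∈ t.edges, w ∈ g →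
      Relation.ReflTransGen (adjE t.edges) f g := by
    intro u w h
    induction h using Relation.ReflTransGen.head_induction_on with
    | refl =>
      intro f hf huf g hg hug
      exact Relation.ReflTransGen.single ⟨hf, hg, w, huf, hug⟩
    | @head a c hrel hrest ih =>
      intro f hf huf g hg hwg
      have step : adjE t.edges f s(a, c) := ⟨hf, hrel, a, huf, by simp⟩
      exact Relation.ReflTransGen.head step (ih s(a, c) hrel (by simp) g hg hwg)
  intro f hf f' hf'
  obtain ⟨u, hu⟩ := sym2_exists_mem f
  obtain ⟨w, hw⟩ := sym2_exists_mem f'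
  have hu' : u ∈ t.verts := t.endpoints_mem f hf u hu
  have hw' : w ∈ t.verts := t.endpoints_mem f' hf' w hw
  exact key u w (t.conn u hu' w hw') f hf hu f' hf' hw

/-- Edge-paths give vertex-paths. -/
lemma vconn_of_econn {A : Finset (Sym2 V)} {f f' : Sym2 V}
    (h : Relation.ReflTransGen (adjE A) f f') :
    ∀ u ∈ f, ∀ w ∈ f', f ∈ A → Relation.ReflTransGen (fun a b => s(a, b) ∈ A) u w := by
  have single : ∀ g ∈ A, ∀ u ∈ g, ∀ w ∈ g,
      Relation.ReflTransGen (fun a b => s(a, b) ∈ A) u w := by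
    intro g hg u hu w hw
    rcases eq_or_ne u w with rfl | hne
    · exact Relation.ReflTransGen.refl
    · exact Relation.ReflTransGen.single (by rwa [← sym2_eq_of_mem hu hw hne])
  induction h using Relation.ReflTransGen.head_induction_on with
  | refl => intro u hu w hw hf; exact single _ hf u hu w hw
  | @head a c hrel hrest ih =>
    intro u hu w hw hf
    obtain ⟨ha, hc, v, hva, hvc⟩ := hrel
    exact (single _ ha u hu v hva).trans (ih v hvc w hw hc)

/-- Build a tube out of a nonempty connected edge set. -/
def mkTube (A : Finset (Sym2 V)) (hA : A ⊆ E) (hne : A.Nonempty) (hconn : ConnE A) :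
    Tube E where
  verts := A.biUnion fun f => Finset.univ.filter (· ∈ f)
  edges := A
  nonempty := by
    obtain ⟨f, hf⟩ := hne
    obtain ⟨u, hu⟩ := sym2_exists_mem f
    exact ⟨u, Finset.mem_biUnion.2 ⟨f, hf, by simpa using hu⟩⟩
  edges_sub := hA
  verts_in := by
    intro v hv
    obtain ⟨f, hf, hvf⟩ := Finset.mem_biUnion.1 hv
    exact ⟨f, hA hf, by simpa using hvf⟩
  endpoints_mem := by
    intro e he v hv
    exact Finset.mem_biUnion.2 ⟨e, he, by simpa using hv⟩
  conn := by
    intro u hu w hw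
    obtain ⟨f, hf, huf⟩ := Finset.mem_biUnion.1 hu
    obtain ⟨g, hg, hwg⟩ := Finset.mem_biUnion.1 hw
    simp only [Finset.mem_filter] at huf hwg
    exact vconn_of_econn (hconn f hf g hg) u huf.2 w hwg.2 hf

@[simp] lemma mkTube_edges (A : Finset (Sym2 V)) (hA : A ⊆ E) (hne : A.Nonempty)
    (hconn : ConnE A) : (mkTube A hA hne hconn).edges = A := rfl

lemma mkTube_mem_verts {A : Finset (Sym2 V)} {hA : A ⊆ E} {hne : A.Nonempty}
    {hconn : ConnE A} {v : V} :
    v ∈ (mkTube A hA hne hconn).verts ↔ ∃ f ∈ A, v ∈ f := by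
  simp [mkTube, Finset.mem_biUnion]

/-! ### hvec, ell, zvec basics -/

lemma hvec_nonneg (t : Tube E) (i : Coord E) : 0 ≤ hvec t i := by
  rcases i with v | e <;> unfold hvec <;> split <;> positivity

lemma ell_pos (t : Tube E) : 0 < ell t := by
  obtain ⟨v, hv⟩ := t.nonempty
  have h1 : hvec t (Sum.inl v) = 1 := by simp [hvec, hv]
  calc (0:ℝ) < 1 := one_pos
  _ = hvec t (Sum.inl v) := h1.symm
  _ ≤ ell t := Finset.single_le_sum (fun i _ => hvec_nonneg t i) (Finset.mem_univ _)

lemma sum_zvec (t : Tube E) : ∑ i, zvec t i = 1 := by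
  have := ell_pos t
  simp only [zvec, Pi.smul_apply, smul_eq_mul, ← Finset.mul_sum]
  rw [← ell]
  field_simp

lemma zvec_eq_smul (t : Tube E) : zvec t = (ell t)⁻¹ • hvec t := rfl

lemma hvec_eq_ell_smul (t : Tube E) : hvec t = ell t • zvec t := by
  rw [zvec_eq_smul, smul_smul, mul_inv_cancel₀ (ell_pos t).ne', one_smul]

/-- The filter-cardinality of a two-element `Sym2` against a finset. -/
lemma card_filter_sym2 (s : Finset V) {u w : V} (hne : u ≠ w) :
    ((s.filter (fun v => v ∈ s(u, w))).card : ℝ)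
      = (if u ∈ s then (1:ℝ) else 0) + (if w ∈ s then (1:ℝ) else 0) := by
  have h1 : s.filter (fun v => v ∈ s(u, w)) = s.filter (· = u) ∪ s.filter (· = w) := by
    rw [← Finset.filter_or]
    apply Finset.filter_congr
    intro v _
    simp [Sym2.mem_iff]
  rw [h1, Finset.card_union_of_disjoint, Finset.filter_eq', Finset.filter_eq']
  · split <;> split <;> norm_num
  · rw [Finset.filter_eq', Finset.filter_eq']
    split <;> split <;> simp [Finset.disjoint_singleton, hne, hne.symm]

/-- Key identity: `h_t(x_u) + h_t(x_w) - h_t(y_e) = 2·[e ∈ E(t)]` for an edge `e = s(u,w)`. -/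
lemma hvec_key (t : Tube E) {u w : V} (hne : u ≠ w) (he : s(u, w) ∈ E) :
    hvec t (Sum.inl u) + hvec t (Sum.inl w) - hvec t (Sum.inr ⟨s(u, w), he⟩)
      = if s(u, w) ∈ t.edges then 2 else 0 := by
  by_cases hin : s(u, w) ∈ t.edges
  · have hu : u ∈ t.verts := t.endpoints_mem _ hin u (by simp)
    have hw : w ∈ t.verts := t.endpoints_mem _ hin w (by simp)
    simp [hvec, hin, hu, hw]; norm_num
  · simp only [hvec, hin, if_false, if_neg hin]
    rw [card_filter_sym2 t.verts hne]
    ring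

/-- Coordinates of a finite combination of `hvec`s : vertex coordinates. -/
lemma combo_inl (S : Finset (Tube E)) (c : Tube E → ℝ) (v : V) :
    (∑ t ∈ S, c t • hvec t) (Sum.inl v) = ∑ t ∈ S.filter (fun t => v ∈ t.verts), c t := by
  rw [Finset.sum_apply]
  rw [Finset.sum_filter]
  apply Finset.sum_congr rfl
  intro t _
  by_cases hv : v ∈ t.verts <;> simp [hvec, hv]

/-- Coordinates of a finite combination of `hvec`s : edge coordinates, reduced to
vertex coordinates and the sum over tubes containing the edge. -/
lemma combo_inr (S : Finset (Tube E)) (c : Tube E → ℝ) {u w : V} (hne : u ≠ w)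
    (he : s(u, w) ∈ E) :
    (∑ t ∈ S, c t • hvec t) (Sum.inr ⟨s(u, w), he⟩)
      = (∑ t ∈ S, c t • hvec t) (Sum.inl u) + (∑ t ∈ S, c t • hvec t) (Sum.inl w)
        - 2 * ∑ t ∈ S.filter (fun t => s(u, w) ∈ t.edges), c t := by
  simp only [Finset.sum_apply, Pi.smul_apply, smul_eq_mul]
  rw [Finset.sum_filter]
  have : ∀ t ∈ S, c t * hvec t (Sum.inr ⟨s(u, w), he⟩)
      = c t * hvec t (Sum.inl u) + c t * hvec t (Sum.inl w)
        - 2 * (if s(u, w) ∈ t.edges then c t else 0) := by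
    intro t _
    have hk := hvec_key t hne he
    by_cases hin : s(u, w) ∈ t.edges <;> simp only [hin, if_true, if_false] at hk ⊢ <;>
      linear_combination (-(c t)) * hk
  rw [Finset.sum_congr rfl this]
  rw [Finset.sum_sub_distrib, Finset.sum_add_distrib, ← Finset.mul_sum]

/-- The singleton tube at a vertex. -/
def singTube (hiso : ∀ v : V, ∃ e ∈ E, v ∈ e) (v : V) : Tube E where
  verts := {v}
  edges := ∅
  nonempty := ⟨v, by simp⟩
  edges_sub := by simp
  verts_in := by intro u hu; simp at hu; subst hu; exact hiso u
  endpoints_mem := by simp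
  conn := by
    intro u hu w hw
    simp at hu hw
    subst hu; subst hw
    exact Relation.ReflTransGen.refl

@[simp] lemma singTube_verts (hiso : ∀ v : V, ∃ e ∈ E, v ∈ e) (v : V) :
    (singTube hiso v).verts = {v} := rfl

@[simp] lemma singTube_edges (hiso : ∀ v : V, ∃ e ∈ E, v ∈ e) (v : V) :
    (singTube hiso v).edges = ∅ := rfl

/-- Any tube with empty edge set is a singleton tube. -/
lemma eq_singTube (hiso : ∀ v : V, ∃ e ∈ E, v ∈ e) {t : Tube E} (h : t.edges = ∅) :
    ∃ v, t = singTube hiso v ∧ t.verts = {v} := by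
  obtain ⟨v, hv⟩ := Tube.verts_eq_singleton t h
  exact ⟨v, Tube.ext' (by rw [hv]; rfl) (by rw [h]; rfl), hv⟩

/-- `zvec` is injective. -/
lemma zvec_inj {t s : Tube E} (h : zvec t = zvec s) : t = s := by
  have hvt : ∀ (r : Tube E) (v : V), (v ∈ r.verts ↔ zvec r (Sum.inl v) ≠ 0) := by
    intro r v
    have := (ell_pos r).ne'
    by_cases hv : v ∈ r.verts <;> simp [zvec, hvec, hv, this]
  have hverts : t.verts = s.verts := by
    ext v; rw [hvt t v, hvt s v, h]
  obtain ⟨v, hv⟩ := t.nonempty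
  have hv' : v ∈ s.verts := hverts ▸ hv
  have hell : ell t = ell s := by
    have h1 : zvec t (Sum.inl v) = (ell t)⁻¹ := by simp [zvec, hvec, hv]
    have h2 : zvec s (Sum.inl v) = (ell s)⁻¹ := by simp [zvec, hvec, hv']
    have h3 := h1.symm.trans ((congrFun h (Sum.inl v)).trans h2)
    exact inv_injective h3
  have hh : hvec t = hvec s := by
    have := congrArg (fun z => ell t • z) h
    rw [← hvec_eq_ell_smul, hell, ← hvec_eq_ell_smul] at this
    exact this
  have hedges : t.edges = s.edges := by
    ext f
    by_contra hf
    rcases Decidable.not_iff.1 hf with ⟨⟩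
    have key : ∀ r r' : Tube E, hvec r = hvec r' → r.verts = r'.verts →
        f ∈ r.edges → f ∉ r'.edges → False := by
      intro r r' hrr hvv hfr hfr'
      have hfE : f ∈ E := r.edges_sub hfr
      obtain ⟨a, ha⟩ := sym2_exists_mem f
      have hav : a ∈ r.verts := r.endpoints_mem f hfr a ha
      have h0 : hvec r (Sum.inr ⟨f, hfE⟩) = 0 := by simp [hvec, hfr]
      have h1 : hvec r' (Sum.inr ⟨f, hfE⟩)
          = ((r'.verts.filter (fun v => v ∈ f)).card : ℝ) := by simp [hvec, hfr']
      have hpos : 0 < (r'.verts.filter (fun v => v ∈ f)).card := by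
        apply Finset.card_pos.2
        exact ⟨a, Finset.mem_filter.2 ⟨hvv ▸ hav, ha⟩⟩
      rw [hrr] at h0
      rw [h0] at h1
      exact absurd h1.symm (by positivity)
    by_cases hft : f ∈ t.edges
    · exact key t s hh hverts hft (fun hfs => hf (iff_of_true hft hfs))
    · have hfs : f ∈ s.edges := by
        by_contra hfs
        exact hf (iff_of_false hft hfs)
      exact key s t hh.symm hverts.symm hfs hft
  exact Tube.ext' hverts hedges

/-! ### Tubing structure -/

lemma nested_of_shared {T : Finset (Tube E)} (hT : IsTubing E T) {t s : Tube E}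
    (ht : t ∈ T) (hs : s ∈ T) {v : V} (hvt : v ∈ t.verts) (hvs : v ∈ s.verts) :
    t.edges ⊆ s.edges ∨ s.edges ⊆ t.edges := by
  rcases hT t ht s hs with hd | h | h
  · exact absurd (Finset.mem_inter.2 ⟨hvt, hvs⟩) (by rw [Finset.disjoint_iff_inter_eq_empty.1 hd]; simp)
  · exact Or.inl h
  · exact Or.inr h

lemma chain_min {S : Finset (Tube E)}
    (hch : ∀ a ∈ S, ∀ b ∈ S, a.edges ⊆ b.edges ∨ b.edges ⊆ a.edges) (hne : S.Nonempty) :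
    ∃ m ∈ S, ∀ s ∈ S, m.edges ⊆ s.edges := by
  obtain ⟨m, hm, hmin⟩ := Finset.exists_min_image S (fun s => s.edges.card) hne
  refine ⟨m, hm, fun s hs => ?_⟩
  rcases hch m hm s hs with h | h
  · exact h
  · rw [Finset.eq_of_subset_of_card_le h (hmin s hs)]

lemma chain_max {S : Finset (Tube E)}
    (hch : ∀ a ∈ S, ∀ b ∈ S, a.edges ⊆ b.edges ∨ b.edges ⊆ a.edges) (hne : S.Nonempty) :
    ∃ m ∈ S, ∀ s ∈ S, s.edges ⊆ m.edges := by
  obtain ⟨m, hm, hmax⟩ := Finset.exists_max_image S (fun s => s.edges.card) hne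
  refine ⟨m, hm, fun s hs => ?_⟩
  rcases hch m hm s hs with h | h
  · rw [Finset.eq_of_subset_of_card_le h (hmax s hs)]
  · exact h

/-- Every maximal tubing contains all the singleton tubes. -/
lemma singTube_mem_max (hiso : ∀ v : V, ∃ e ∈ E, v ∈ e) {T : Finset (Tube E)}
    (hT : IsMaxTubing E T) (v : V) : singTube hiso v ∈ T := by
  have htub : IsTubing E (insert (singTube hiso v) T) := by
    intro t₁ h₁ t₂ h₂
    rcases Finset.mem_insert.1 h₁ with rfl | h₁ <;> rcases Finset.mem_insert.1 h₂ with rfl | h₂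
    · exact Or.inr (Or.inl (subset_refl _))
    · exact Or.inr (Or.inl (by simp))
    · exact Or.inr (Or.inr (by simp))
    · exact hT.1 t₁ h₁ t₂ h₂
  have := hT.2 _ htub (Finset.subset_insert _ _)
  rw [← this]
  exact Finset.mem_insert_self _ _

/-- In a tubing, the members containing a fixed edge form a chain. -/
lemma chain_of_mem_edge {T : Finset (Tube E)} (hT : IsTubing E T) {f : Sym2 V}
    {a b : Tube E} (ha : a ∈ T) (hb : b ∈ T) (hfa : f ∈ a.edges) (hfb : f ∈ b.edges) :
    a.edges ⊆ b.edges ∨ b.edges ⊆ a.edges := by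
  obtain ⟨v, hv⟩ := sym2_exists_mem f
  exact nested_of_shared hT ha hb (a.endpoints_mem f hfa v hv) (b.endpoints_mem f hfb v hv)

/-- If every edge of a connected edge set is covered by a member of a tubing satisfying `P`,
then a single member satisfying `P` covers the whole edge set. -/
lemma adjconst {T : Finset (Tube E)} (hT : IsTubing E T) (P : Tube E → Prop)
    {A : Finset (Sym2 V)} (hconn : ConnE A) (hAne : A.Nonempty)
    (hA : ∀ f ∈ A, ∃ s ∈ T, f ∈ s.edges ∧ P s) :
    ∃ s ∈ T, P s ∧ A ⊆ s.edges := by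
  classical
  set maxP : Sym2 V → Tube E → Prop := fun f m =>
    m ∈ T ∧ P m ∧ f ∈ m.edges ∧ ∀ s ∈ T, P s → f ∈ s.edges → s.edges ⊆ m.edges with hmaxP
  have hex : ∀ f ∈ A, ∃ m, maxP f m := by
    intro f hf
    have hSne : (T.filter (fun s => f ∈ s.edges ∧ P s)).Nonempty := by
      obtain ⟨s, hs, hfs, hPs⟩ := hA f hf
      exact ⟨s, Finset.mem_filter.2 ⟨hs, hfs, hPs⟩⟩
    obtain ⟨m, hm, hmax⟩ := chain_max (S := T.filter (fun s => f ∈ s.edges ∧ P s))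
      (fun a ha b hb => by
        simp only [Finset.mem_filter] at ha hb
        exact chain_of_mem_edge hT ha.1 hb.1 ha.2.1 hb.2.1) hSne
    simp only [Finset.mem_filter] at hm
    exact ⟨m, hm.1, hm.2.2, hm.2.1, fun s hs hPs hfs =>
      hmax s (Finset.mem_filter.2 ⟨hs, hfs, hPs⟩)⟩
  have huniq : ∀ f f' m m', adjE A f f' → maxP f m → maxP f' m' → m = m' := by
    intro f f' m m' hadj hm hm'
    obtain ⟨hfA, hf'A, v, hvf, hvf'⟩ := hadj
    have hvm : v ∈ m.verts := m.endpoints_mem f hm.2.2.1 v hvf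
    have hvm' : v ∈ m'.verts := m'.endpoints_mem f' hm'.2.2.1 v hvf'
    rcases nested_of_shared hT hm.1 hm'.1 hvm hvm' with h | h
    · have hfm' : f ∈ m'.edges := h hm.2.2.1
      have := hm.2.2.2 m' hm'.1 hm'.2.1 hfm'
      exact (Tube.eq_of_edges_eq ⟨f, hm.2.2.1⟩ (Finset.Subset.antisymm h this))
    · have hf'm : f' ∈ m.edges := h hm'.2.2.1
      have := hm'.2.2.2 m hm.1 hm.2.1 hf'm
      exact (Tube.eq_of_edges_eq ⟨f, hm.2.2.1⟩ (Finset.Subset.antisymm this h))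
  obtain ⟨f₀, hf₀⟩ := hAne
  obtain ⟨m₀, hm₀⟩ := hex f₀ hf₀
  refine ⟨m₀, hm₀.1, hm₀.2.1, fun f hf => ?_⟩
  -- all the maximal members agree along paths
  have key : ∀ g g', Relation.ReflTransGen (adjE A) g g' → ∀ m, maxP g m → maxP g' m := by
    intro g g' hpath
    induction hpath with
    | refl => exact fun m hm => hm
    | @tail b c hab hbc ih =>
      intro m hm
      obtain ⟨mc, hmc⟩ := hex c hbc.2.1
      have heq := huniq b c m mc hbc (ih m hm) hmc
      exact heq ▸ hmc
  have := key f₀ f (hconn f₀ hf₀ f hf) m₀ hm₀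
  exact this.2.2.1

/-! ### The union construction: covering and uniqueness of private edges -/

def touchE (e : Sym2 V) (s : Tube E) : Prop := ∃ v : V, v ∈ e ∧ v ∈ s.verts

instance (e : Sym2 V) (s : Tube E) : Decidable (touchE e s) := by
  unfold touchE; infer_instance

lemma connE_of_hub {A : Finset (Sym2 V)} {e : Sym2 V} (heA : e ∈ A)
    (h : ∀ f ∈ A, Relation.ReflTransGen (adjE A) f e) : ConnE A := by
  intro f hf f' hf'
  exact (h f hf).trans ((@Relation.ReflTransGen.stdSymm _ (adjE A) ⟨fun _ _ => adjE_symm⟩).symm _ _ (h f' hf'))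

lemma tube_path_to_hub {A : Finset (Sym2 V)} {e : Sym2 V} (heA : e ∈ A) (s : Tube E)
    (hsub : s.edges ⊆ A) {f : Sym2 V} (hf : f ∈ s.edges) {p : V} (hp : p ∈ e)
    (hps : p ∈ s.verts) : Relation.ReflTransGen (adjE A) f e := by
  obtain ⟨f₂, hf₂, hpf₂⟩ := (Tube.mem_verts_iff s ⟨f, hf⟩).1 hps
  have hpath : Relation.ReflTransGen (adjE s.edges) f f₂ := s.connE f hf f₂ hf₂
  have hpath' : Relation.ReflTransGen (adjE A) f f₂ :=
    Relation.ReflTransGen.mono (fun _ _ hab => adjE_mono hsub hab) _ _ hpath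
  exact hpath'.tail ⟨hsub hf₂, heA, p, hpf₂, hp⟩

/-- In a maximal tubing, every edge of the graph is covered by some tube. -/
lemma edge_covered {T : Finset (Tube E)} (hT : IsMaxTubing E T) {e : Sym2 V} (he : e ∈ E) :
    ∃ t ∈ T, e ∈ t.edges := by
  by_contra hnone
  push_neg at hnone
  set B : Finset (Sym2 V) := T.biUnion (fun s => if touchE e s then s.edges else ∅) with hB
  set A : Finset (Sym2 V) := insert e B with hA
  have hBmem : ∀ {f}, f ∈ B ↔ ∃ s ∈ T, touchE e s ∧ f ∈ s.edges := by
    intro f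
    simp only [hB, Finset.mem_biUnion]
    constructor
    · rintro ⟨s, hs, hf⟩
      by_cases hts : touchE e s
      · exact ⟨s, hs, hts, by rwa [if_pos hts] at hf⟩
      · rw [if_neg hts] at hf; simp at hf
    · rintro ⟨s, hs, hts, hf⟩
      exact ⟨s, hs, by rwa [if_pos hts]⟩
  have hsubE : A ⊆ E := by
    intro f hf
    rcases Finset.mem_insert.1 hf with rfl | hf
    · exact he
    · obtain ⟨s, _, _, hfs⟩ := hBmem.1 hf
      exact s.edges_sub hfs
  have heA : e ∈ A := Finset.mem_insert_self _ _
  have hsubA : ∀ s ∈ T, touchE e s → s.edges ⊆ A := by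
    intro s hs hts f hf
    exact Finset.mem_insert_of_mem (hBmem.2 ⟨s, hs, hts, hf⟩)
  have hconn : ConnE A := by
    apply connE_of_hub heA
    intro f hf
    rcases Finset.mem_insert.1 hf with rfl | hf
    · exact Relation.ReflTransGen.refl
    · obtain ⟨s, hs, ⟨p, hp, hps⟩, hfs⟩ := hBmem.1 hf
      exact tube_path_to_hub heA s (hsubA s hs ⟨p, hp, hps⟩) hfs hp hps
  set u : Tube E := mkTube A hsubE ⟨e, heA⟩ hconn with hu
  have hcompat : ∀ s ∈ T, Disjoint u.verts s.verts ∨ u.edges ⊆ s.edges ∨ s.edges ⊆ u.edges := by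
    intro s hs
    by_cases hd : Disjoint u.verts s.verts
    · exact Or.inl hd
    obtain ⟨v, hvu, hvs⟩ := Finset.not_disjoint_iff.1 hd
    obtain ⟨f, hfA, hvf⟩ := mkTube_mem_verts.1 hvu
    right; right
    rcases Finset.mem_insert.1 hfA with rfl | hfB
    · exact hsubA s hs ⟨v, hvf, hvs⟩
    · obtain ⟨s', hs', hts', hfs'⟩ := hBmem.1 hfB
      have hvm : v ∈ s'.verts := s'.endpoints_mem f hfs' v hvf
      rcases nested_of_shared hT.1 hs hs' hvs hvm with h | h
      · exact h.trans (hsubA s' hs' hts')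
      · obtain ⟨p, hp, hps'⟩ := hts'
        have : s'.verts ⊆ s.verts := Tube.verts_subset_of_edges_subset ⟨f, hfs'⟩ h
        exact hsubA s hs ⟨p, hp, this hps'⟩
  have htub : IsTubing E (insert u T) := by
    intro t₁ h₁ t₂ h₂
    rcases Finset.mem_insert.1 h₁ with rfl | h₁ <;> rcases Finset.mem_insert.1 h₂ with rfl | h₂
    · exact Or.inr (Or.inl (subset_refl _))
    · rcases hcompat t₂ h₂ with h | h | h
      · exact Or.inl h
      · exact Or.inr (Or.inl h)
      · exact Or.inr (Or.inr h)
    · rcases hcompat t₁ h₁ with h | h | h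
      · exact Or.inl h.symm
      · exact Or.inr (Or.inr h)
      · exact Or.inr (Or.inl h)
    · exact hT.1 t₁ h₁ t₂ h₂
  have hTeq := hT.2 _ htub (Finset.subset_insert _ _)
  have huT : u ∈ T := by rw [← hTeq]; exact Finset.mem_insert_self _ _
  exact hnone u huT heA

/-- Minimal member containing a given edge. -/
lemma exists_min_containing {T : Finset (Tube E)} (hT : IsTubing E T) {e : Sym2 V}
    (h : ∃ t ∈ T, e ∈ t.edges) :
    ∃ m ∈ T, e ∈ m.edges ∧ ∀ s ∈ T, e ∈ s.edges → m.edges ⊆ s.edges := by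
  classical
  obtain ⟨t, ht, het⟩ := h
  obtain ⟨m, hm, hmin⟩ := chain_min (S := T.filter (fun s => e ∈ s.edges))
    (fun a ha b hb => by
      simp only [Finset.mem_filter] at ha hb
      exact chain_of_mem_edge hT ha.1 hb.1 ha.2 hb.2)
    ⟨t, Finset.mem_filter.2 ⟨ht, het⟩⟩
  simp only [Finset.mem_filter] at hm
  exact ⟨m, hm.1, hm.2, fun s hs hes => hmin s (Finset.mem_filter.2 ⟨hs, hes⟩)⟩

/-- Every edge-tube in a tubing has a private edge. -/
lemma exists_private_edge {T : Finset (Tube E)} (hT : IsTubing E T) {t : Tube E}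
    (ht : t ∈ T) (hne : t.edges.Nonempty) :
    ∃ e ∈ t.edges, ∀ s ∈ T, e ∈ s.edges → t.edges ⊆ s.edges := by
  by_contra hno
  push_neg at hno
  have hall : ∀ f ∈ t.edges, ∃ s ∈ T, f ∈ s.edges ∧ s.edges ⊂ t.edges := by
    intro f hf
    obtain ⟨s, hs, hfs, hnsub⟩ := hno f hf
    rcases chain_of_mem_edge hT ht hs hf hfs with h | h
    · exact absurd h hnsub
    · exact ⟨s, hs, hfs, lt_of_le_of_ne h (fun hh => hnsub (le_of_eq hh.symm))⟩
  obtain ⟨s, hs, hPs, hsub⟩ := adjconst hT (fun s => s.edges ⊂ t.edges) t.connE hne hall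
  exact hPs.2 hsub

/-- In a maximal tubing, the private edge of a tube is unique. -/
lemma private_edge_unique {T : Finset (Tube E)} (hT : IsMaxTubing E T) {t : Tube E}
    (ht : t ∈ T) {e₁ e₂ : Sym2 V} (h₁ : e₁ ∈ t.edges) (h₂ : e₂ ∈ t.edges)
    (hm₁ : ∀ s ∈ T, e₁ ∈ s.edges → t.edges ⊆ s.edges)
    (hm₂ : ∀ s ∈ T, e₂ ∈ s.edges → t.edges ⊆ s.edges) : e₁ = e₂ := by
  by_contra hne
  set B : Finset (Sym2 V) :=
    T.biUnion (fun s => if touchE e₁ s ∧ s.edges ⊂ t.edges then s.edges else ∅) with hB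
  set A : Finset (Sym2 V) := insert e₁ B with hA
  have hBmem : ∀ {f}, f ∈ B ↔ ∃ s ∈ T, (touchE e₁ s ∧ s.edges ⊂ t.edges) ∧ f ∈ s.edges := by
    intro f
    simp only [hB, Finset.mem_biUnion]
    constructor
    · rintro ⟨s, hs, hf⟩
      by_cases hts : touchE e₁ s ∧ s.edges ⊂ t.edges
      · exact ⟨s, hs, hts, by rwa [if_pos hts] at hf⟩
      · rw [if_neg hts] at hf; simp at hf
    · rintro ⟨s, hs, hts, hf⟩
      exact ⟨s, hs, by rwa [if_pos hts]⟩
  have hsubt : A ⊆ t.edges := by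
    intro f hf
    rcases Finset.mem_insert.1 hf with rfl | hf
    · exact h₁
    · obtain ⟨s, _, hts, hfs⟩ := hBmem.1 hf
      exact hts.2.subset hfs
  have hsubE : A ⊆ E := hsubt.trans t.edges_sub
  have heA : e₁ ∈ A := Finset.mem_insert_self _ _
  have hsubA : ∀ s ∈ T, touchE e₁ s → s.edges ⊂ t.edges → s.edges ⊆ A := by
    intro s hs hts hst f hf
    exact Finset.mem_insert_of_mem (hBmem.2 ⟨s, hs, ⟨hts, hst⟩, hf⟩)
  have hconn : ConnE A := by
    apply connE_of_hub heA
    intro f hf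
    rcases Finset.mem_insert.1 hf with rfl | hf
    · exact Relation.ReflTransGen.refl
    · obtain ⟨s, hs, ⟨⟨p, hp, hps⟩, hst⟩, hfs⟩ := hBmem.1 hf
      exact tube_path_to_hub heA s (hsubA s hs ⟨p, hp, hps⟩ hst) hfs hp hps
  set u : Tube E := mkTube A hsubE ⟨e₁, heA⟩ hconn with hu
  -- compatibility with the members of T
  have hcompat : ∀ s ∈ T, Disjoint u.verts s.verts ∨ u.edges ⊆ s.edges ∨ s.edges ⊆ u.edges := by
    intro s hs
    by_cases hd : Disjoint u.verts s.verts
    · exact Or.inl hd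
    obtain ⟨v, hvu, hvs⟩ := Finset.not_disjoint_iff.1 hd
    obtain ⟨f, hfA, hvf⟩ := mkTube_mem_verts.1 hvu
    right
    have hcase : touchE e₁ s → u.edges ⊆ s.edges ∨ s.edges ⊆ u.edges := by
      intro hts
      obtain ⟨p, hp, hps⟩ := hts
      have hpt : p ∈ t.verts := t.endpoints_mem e₁ h₁ p hp
      rcases nested_of_shared hT.1 hs ht hps hpt with h | h
      · rcases lt_or_eq_of_le h with hlt | heq
        · exact Or.inr (hsubA s hs ⟨p, hp, hps⟩ hlt)
        · exact Or.inl (by rw [show u.edges = A from rfl]; exact hsubt.trans (le_of_eq heq.symm))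
      · exact Or.inl (by rw [show u.edges = A from rfl]; exact hsubt.trans h)
    rcases Finset.mem_insert.1 hfA with rfl | hfB
    · exact hcase ⟨v, hvf, hvs⟩
    · obtain ⟨s', hs', ⟨⟨p, hp, hps'⟩, hst'⟩, hfs'⟩ := hBmem.1 hfB
      have hvm : v ∈ s'.verts := s'.endpoints_mem f hfs' v hvf
      rcases nested_of_shared hT.1 hs hs' hvs hvm with h | h
      · exact Or.inr (h.trans (hsubA s' hs' ⟨p, hp, hps'⟩ hst'))
      · have : s'.verts ⊆ s.verts := Tube.verts_subset_of_edges_subset ⟨f, hfs'⟩ h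
        exact hcase ⟨p, hp, this hps'⟩
  have htub : IsTubing E (insert u T) := by
    intro t₁ hh₁ t₂ hh₂
    rcases Finset.mem_insert.1 hh₁ with rfl | hh₁ <;> rcases Finset.mem_insert.1 hh₂ with rfl | hh₂
    · exact Or.inr (Or.inl (subset_refl _))
    · rcases hcompat t₂ hh₂ with h | h | h
      · exact Or.inl h
      · exact Or.inr (Or.inl h)
      · exact Or.inr (Or.inr h)
    · rcases hcompat t₁ hh₁ with h | h | h
      · exact Or.inl h.symm
      · exact Or.inr (Or.inr h)
      · exact Or.inr (Or.inl h)
    · exact hT.1 t₁ hh₁ t₂ hh₂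
  have hTeq := hT.2 _ htub (Finset.subset_insert _ _)
  have huT : u ∈ T := by rw [← hTeq]; exact Finset.mem_insert_self _ _
  -- e₁ ∈ u.edges, so t.edges ⊆ u.edges = A; but e₂ ∉ A, contradiction
  have h1 : t.edges ⊆ A := hm₁ u huT heA
  have h2 : e₂ ∈ A := h1 h₂
  rcases Finset.mem_insert.1 h2 with heq | h2B
  · exact hne heq.symm
  · obtain ⟨s, hs, hts, hfs⟩ := hBmem.1 h2B
    exact absurd (hm₂ s hs hfs) (fun hc => (hts.2.not_subset) hc)

/-! ### Counting and linear independence -/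

lemma sum_subtype_tube {M : Type*} [AddCommMonoid M] (T : Finset (Tube E)) (F : Tube E → M) :
    ∑ i : {t // t ∈ T}, F i.1 = ∑ t ∈ T, F t := by
  rw [Finset.univ_eq_attach, Finset.sum_attach]

lemma singTube_injective (hiso : ∀ v : V, ∃ e ∈ E, v ∈ e) :
    Function.Injective (singTube (E := E) hiso) := by
  intro a b h
  have : ({a} : Finset V) = {b} := by
    have := congrArg Tube.verts h
    simpa using this
  simpa using this

/-- The cardinality of a maximal tubing. -/
lemma maxTubing_card (hE : ∀ e ∈ E, ¬ e.IsDiag) (hiso : ∀ v : V, ∃ e ∈ E, v ∈ e)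
    {T : Finset (Tube E)} (hT : IsMaxTubing E T) :
    T.card = Fintype.card V + E.card := by
  classical
  have hsplit := Finset.card_filter_add_card_filter_not
    (s := T) (p := fun t => t.edges = ∅)
  have hsing : T.filter (fun t => t.edges = ∅) = Finset.univ.image (singTube hiso) := by
    ext t
    simp only [Finset.mem_filter, Finset.mem_image, Finset.mem_univ, true_and]
    constructor
    · rintro ⟨htT, hte⟩
      obtain ⟨v, htv, _⟩ := eq_singTube hiso hte
      exact ⟨v, htv.symm⟩
    · rintro ⟨v, rfl⟩
      exact ⟨singTube_mem_max hiso hT v, rfl⟩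
  have hcard1 : (T.filter (fun t => t.edges = ∅)).card = Fintype.card V := by
    rw [hsing, Finset.card_image_of_injective _ (singTube_injective hiso), Finset.card_univ]
  have hmin : ∀ e ∈ E, ∃ m, m ∈ T ∧ e ∈ m.edges ∧
      ∀ s ∈ T, e ∈ s.edges → m.edges ⊆ s.edges := by
    intro e he
    obtain ⟨m, hm, h1, h2⟩ := exists_min_containing hT.1 (edge_covered hT he)
    exact ⟨m, hm, h1, h2⟩
  have hcard2 : (T.filter (fun t => ¬ t.edges = ∅)).card = E.card := by
    symm
    apply Finset.card_bij (fun e he => (hmin e he).choose)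
    · intro e he
      obtain ⟨hmT, hem, _⟩ := (hmin e he).choose_spec
      exact Finset.mem_filter.2 ⟨hmT, Finset.nonempty_iff_ne_empty.1 ⟨e, hem⟩⟩
    · intro e₁ he₁ e₂ he₂ heq
      obtain ⟨h1T, h1m, h1min⟩ := (hmin e₁ he₁).choose_spec
      obtain ⟨h2T, h2m, h2min⟩ := (hmin e₂ he₂).choose_spec
      rw [heq] at h1T h1m h1min
      exact private_edge_unique hT h2T h1m h2m h1min h2min
    · intro t htf
      obtain ⟨htT, hne⟩ := Finset.mem_filter.1 htf
      have hne' : t.edges.Nonempty := Finset.nonempty_iff_ne_empty.2 hne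
      obtain ⟨e, het, hepriv⟩ := exists_private_edge hT.1 htT hne'
      have heE : e ∈ E := t.edges_sub het
      refine ⟨e, heE, ?_⟩
      obtain ⟨hmT, hem, hmmin⟩ := (hmin e heE).choose_spec
      have h1 : (hmin e heE).choose.edges ⊆ t.edges := hmmin t htT het
      have h2 : t.edges ⊆ (hmin e heE).choose.edges := hepriv _ hmT hem
      exact Tube.eq_of_edges_eq ⟨e, hem⟩ (Finset.Subset.antisymm h1 h2)
  omega

/-- Linear independence of the `hvec`s of a maximal tubing (kernel form). -/
lemma hvec_indep (hE : ∀ e ∈ E, ¬ e.IsDiag) (hiso : ∀ v : V, ∃ e ∈ E, v ∈ e)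
    {T : Finset (Tube E)} (hT : IsMaxTubing E T) (lam : Tube E → ℝ)
    (hsum : ∑ t ∈ T, lam t • hvec t = 0) : ∀ t ∈ T, lam t = 0 := by
  classical
  have star : ∀ {e : Sym2 V}, e ∈ E →
      ∑ t ∈ T.filter (fun t => e ∈ t.edges), lam t = 0 := by
    intro e he
    obtain ⟨u, w, huw, rfl⟩ := exists_ne_of_mem_E hE he
    have h := combo_inr T lam huw he
    rw [hsum] at h
    simp only [Pi.zero_apply] at h
    linarith
  have dagger : ∀ v : V, ∑ t ∈ T.filter (fun t => v ∈ t.verts), lam t = 0 := by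
    intro v
    have h := combo_inl T lam v
    rw [hsum] at h
    simp only [Pi.zero_apply] at h
    exact h.symm
  -- chain sums vanish
  have chain : ∀ t ∈ T, t.edges.Nonempty →
      ∑ s ∈ T.filter (fun s => t.edges ⊆ s.edges), lam s = 0 := by
    intro t htT htne
    obtain ⟨e, het, hepriv⟩ := exists_private_edge hT.1 htT htne
    have hfeq : T.filter (fun s => e ∈ s.edges) = T.filter (fun s => t.edges ⊆ s.edges) := by
      ext s
      simp only [Finset.mem_filter, and_congr_right_iff]
      intro hsT
      exact ⟨fun hes => hepriv s hsT hes, fun hsub => hsub het⟩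
    rw [← hfeq]
    exact star (t.edges_sub het)
  -- peel from the top
  have peel : ∀ n : ℕ, ∀ t ∈ T, t.edges.Nonempty →
      (T.filter (fun s => t.edges ⊂ s.edges)).card ≤ n → lam t = 0 := by
    intro n
    induction n with
    | zero =>
      intro t htT htne hcard
      have hempty : T.filter (fun s => t.edges ⊂ s.edges) = ∅ :=
        Finset.card_eq_zero.1 (Nat.le_zero.1 hcard)
      have hsplit : T.filter (fun s => t.edges ⊆ s.edges)
          = insert t (T.filter (fun s => t.edges ⊂ s.edges)) := by
        ext s
        simp only [Finset.mem_filter, Finset.mem_insert]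
        constructor
        · rintro ⟨hsT, hsub⟩
          rcases eq_or_ne s t with rfl | hne
          · exact Or.inl rfl
          · exact Or.inr ⟨hsT, Finset.ssubset_iff_subset_ne.2 ⟨hsub, fun hh =>
              hne (Tube.eq_of_edges_eq (htne.mono hsub) hh.symm)⟩⟩
        · rintro (rfl | ⟨hsT, hsub⟩)
          · exact ⟨htT, subset_refl _⟩
          · exact ⟨hsT, hsub.subset⟩
      have := chain t htT htne
      rw [hsplit, hempty] at this
      simpa using this
    | succ n ih =>
      intro t htT htne hcard
      have hsplit : T.filter (fun s => t.edges ⊆ s.edges)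
          = insert t (T.filter (fun s => t.edges ⊂ s.edges)) := by
        ext s
        simp only [Finset.mem_filter, Finset.mem_insert]
        constructor
        · rintro ⟨hsT, hsub⟩
          rcases eq_or_ne s t with rfl | hne
          · exact Or.inl rfl
          · exact Or.inr ⟨hsT, Finset.ssubset_iff_subset_ne.2 ⟨hsub, fun hh =>
              hne (Tube.eq_of_edges_eq (htne.mono hsub) hh.symm)⟩⟩
        · rintro (rfl | ⟨hsT, hsub⟩)
          · exact ⟨htT, subset_refl _⟩
          · exact ⟨hsT, hsub.subset⟩
      have hnotmem : t ∉ T.filter (fun s => t.edges ⊂ s.edges) := by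
        simp only [Finset.mem_filter]
        rintro ⟨-, h⟩
        exact h.2 (subset_refl _)
      have hzero : ∀ s ∈ T.filter (fun s => t.edges ⊂ s.edges), lam s = 0 := by
        intro s hsf
        obtain ⟨hsT, hss⟩ := Finset.mem_filter.1 hsf
        apply ih s hsT (htne.mono hss.subset)
        have hsubf : T.filter (fun r => s.edges ⊂ r.edges)
            ⊆ (T.filter (fun r => t.edges ⊂ r.edges)).erase s := by
          intro r hr
          obtain ⟨hrT, hrs⟩ := Finset.mem_filter.1 hr
          refine Finset.mem_erase.2 ⟨?_, Finset.mem_filter.2 ⟨hrT, hss.trans hrs⟩⟩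
          rintro rfl
          exact hrs.2 (subset_refl _)
        calc (T.filter (fun r => s.edges ⊂ r.edges)).card
            ≤ ((T.filter (fun r => t.edges ⊂ r.edges)).erase s).card :=
              Finset.card_le_card hsubf
          _ ≤ (T.filter (fun r => t.edges ⊂ r.edges)).card - 1 :=
              le_of_eq (Finset.card_erase_of_mem hsf)
          _ ≤ n := by omega
      have hch := chain t htT htne
      rw [hsplit, Finset.sum_insert hnotmem, Finset.sum_eq_zero hzero] at hch
      simpa using hch
  intro t htT
  by_cases htne : t.edges = ∅
  · -- singleton tube
    obtain ⟨v, htv, hverts⟩ := eq_singTube hiso htne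
    have hd := dagger v
    have hmemf : t ∈ T.filter (fun s => v ∈ s.verts) :=
      Finset.mem_filter.2 ⟨htT, by rw [hverts]; simp⟩
    rw [Finset.sum_eq_single_of_mem t hmemf] at hd
    · exact hd
    · intro s hsf hst
      obtain ⟨hsT, hvs⟩ := Finset.mem_filter.1 hsf
      by_cases hse : s.edges = ∅
      · obtain ⟨w, hsw, hsverts⟩ := eq_singTube hiso hse
        rw [hsverts] at hvs
        simp only [Finset.mem_singleton] at hvs
        subst hvs
        exact absurd (hsw.trans htv.symm) hst
      · exact peel T.card s hsT (Finset.nonempty_iff_ne_empty.2 hse)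
          (Finset.card_le_card (Finset.filter_subset _ _))
  · exact peel T.card t htT (Finset.nonempty_iff_ne_empty.2 htne)
      (Finset.card_le_card (Finset.filter_subset _ _))

/-- Linear independence of `hvec` over a maximal tubing. -/
lemma hvec_linearIndependent (hE : ∀ e ∈ E, ¬ e.IsDiag) (hiso : ∀ v : V, ∃ e ∈ E, v ∈ e)
    {T : Finset (Tube E)} (hT : IsMaxTubing E T) :
    LinearIndependent ℝ (fun t : {t // t ∈ T} => hvec t.1) := by
  classical
  rw [Fintype.linearIndependent_iff]
  intro g hg i
  set lam : Tube E → ℝ := fun t => if h : t ∈ T then g ⟨t, h⟩ else 0 with hlam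
  have hsum : ∑ t ∈ T, lam t • hvec t = 0 := by
    rw [← hg, ← sum_subtype_tube T (fun t => lam t • hvec t)]
    apply Finset.sum_congr rfl
    intro i _
    simp [hlam, i.2]
  have := hvec_indep hE hiso hT lam hsum i.1 i.2
  simpa [hlam, i.2] using this

/-- Affine independence of the `zvec`s of a maximal tubing. -/
lemma zvec_affineIndep (hE : ∀ e ∈ E, ¬ e.IsDiag) (hiso : ∀ v : V, ∃ e ∈ E, v ∈ e)
    {T : Finset (Tube E)} (hT : IsMaxTubing E T) :
    AffineIndependent ℝ (fun t : {t // t ∈ T} => zvec t.1) := by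
  classical
  rw [affineIndependent_iff_of_fintype]
  intro w hw0 hws
  rw [Finset.weightedVSub_eq_linear_combination _ hw0] at hws
  intro i
  set lam : Tube E → ℝ := fun t => if h : t ∈ T then w ⟨t, h⟩ * (ell t)⁻¹ else 0 with hlam
  have hsum : ∑ t ∈ T, lam t • hvec t = 0 := by
    rw [← hws, ← sum_subtype_tube T (fun t => lam t • hvec t)]
    apply Finset.sum_congr rfl
    intro i _
    simp only [hlam, i.2, dif_pos]
    rw [zvec_eq_smul, smul_smul]
  have h0 := hvec_indep hE hiso hT lam hsum i.1 i.2
  simp only [hlam, i.2, dif_pos, mul_eq_zero, inv_eq_zero] at h0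
  rcases h0 with h | h
  · exact h
  · exact absurd h (ell_pos i.1).ne'

/-! ### Convex hull plumbing -/

lemma zvec_image_coe (T : Finset (Tube E)) :
    zvec '' (T : Set (Tube E)) = ↑(T.image zvec) := by
  rw [Finset.coe_image]

lemma mem_hull_iff (T : Finset (Tube E)) (z : Coord E → ℝ) :
    z ∈ convexHull ℝ (zvec '' (T : Set (Tube E))) ↔
      ∃ a : Tube E → ℝ, (∀ t, 0 ≤ a t) ∧ (∀ t, a t ≠ 0 → t ∈ T) ∧
        ∑ t ∈ T, a t = 1 ∧ z = ∑ t ∈ T, a t • zvec t := by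
  classical
  constructor
  · intro hz
    rw [zvec_image_coe, Finset.convexHull_eq] at hz
    obtain ⟨w, hw0, hw1, hwz⟩ := hz
    have hinj : ∀ x ∈ T, ∀ y ∈ T, zvec x = zvec y → x = y := fun x _ y _ h => zvec_inj h
    refine ⟨fun t => if t ∈ T then w (zvec t) else 0, ?_, ?_, ?_, ?_⟩
    · intro t
      by_cases hmem : t ∈ T
      · simp only [hmem, if_true]
        exact hw0 _ (Finset.mem_image_of_mem _ hmem)
      · simp [hmem]
    · intro t ht
      by_contra hT
      exact ht (by simp [hT])
    · rw [← hw1, Finset.sum_image hinj]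
      apply Finset.sum_congr rfl
      intro t ht
      simp [ht]
    · rw [← hwz, Finset.centerMass_eq_of_sum_1 _ id hw1]
      rw [Finset.sum_image (f := fun p => w p • id p) hinj]
      apply Finset.sum_congr rfl
      intro t ht
      simp [ht]
  · rintro ⟨a, ha0, hsupp, ha1, rfl⟩
    have := Finset.centerMass_mem_convexHull T (fun t _ => ha0 t)
      (by rw [ha1]; exact one_pos) (z := zvec)
      (fun t ht => Set.mem_image_of_mem _ ht)
    rwa [Finset.centerMass_eq_of_sum_1 _ _ ha1] at this

lemma dualCosmo_eq_hull_univ :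
    dualCosmo E = convexHull ℝ (zvec '' ((Finset.univ : Finset (Tube E)) : Set (Tube E))) := by
  unfold dualCosmo
  congr 1
  ext z
  simp [eq_comm]

lemma mem_dualCosmo_iff (z : Coord E → ℝ) :
    z ∈ dualCosmo E ↔
      ∃ c : Tube E → ℝ, (∀ t, 0 ≤ c t) ∧ ∑ t, c t = 1 ∧ z = ∑ t, c t • zvec t := by
  rw [dualCosmo_eq_hull_univ, mem_hull_iff]
  constructor
  · rintro ⟨a, h0, _, h1, rfl⟩
    exact ⟨a, h0, h1, rfl⟩
  · rintro ⟨c, h0, h1, rfl⟩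
    exact ⟨c, h0, fun t _ => Finset.mem_univ t, h1, rfl⟩

lemma sum_coords_combo (S : Finset (Tube E)) (a : Tube E → ℝ) :
    ∑ i, (∑ t ∈ S, a t • zvec t) i = ∑ t ∈ S, a t := by
  simp only [Finset.sum_apply]
  rw [Finset.sum_comm]
  apply Finset.sum_congr rfl
  intro t _
  simp only [Pi.smul_apply, smul_eq_mul, ← Finset.mul_sum, sum_zvec, mul_one]

/-- Every tubing extends to a maximal tubing. -/
lemma exists_max_tubing {T₀ : Finset (Tube E)} (h : IsTubing E T₀) :
    ∃ T : Finset (Tube E), IsMaxTubing E T ∧ T₀ ⊆ T := by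
  classical
  have aux : ∀ n : ℕ, ∀ T₀ : Finset (Tube E), IsTubing E T₀ →
      Fintype.card (Tube E) ≤ T₀.card + n → ∃ T, IsMaxTubing E T ∧ T₀ ⊆ T := by
    intro n
    induction n with
    | zero =>
      intro T₀ htub hcard
      refine ⟨T₀, ⟨htub, fun T' htub' hsub => ?_⟩, subset_refl _⟩
      have hle : T'.card ≤ T₀.card := le_trans (Finset.card_le_univ T') (by simpa using hcard)
      exact (Finset.eq_of_subset_of_card_le hsub hle).symm
    | succ n ih =>
      intro T₀ htub hcard
      by_cases hmax : IsMaxTubing E T₀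
      · exact ⟨T₀, hmax, subset_refl _⟩
      · have h2 : ¬ (∀ T' : Finset (Tube E), IsTubing E T' → T₀ ⊆ T' → T' = T₀) :=
          fun hall => hmax ⟨htub, hall⟩
        push_neg at h2
        obtain ⟨T', htub', hsub', hne'⟩ := h2
        have hlt : T₀.card < T'.card :=
          Finset.card_lt_card (Finset.ssubset_iff_subset_ne.2 ⟨hsub', hne'.symm⟩)
        obtain ⟨T, hT, hsub⟩ := ih T' htub' (by omega)
        exact ⟨T, hT, hsub'.trans hsub⟩
  exact aux (Fintype.card (Tube E)) T₀ h (by omega)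

/-! ### Support lemma: common refinement of two maximal tubings -/

/-- Boundary edge: a proper connected extension has an edge outside `t` touching `t`. -/
lemma boundary_edge {t u : Tube E} (hsub : t.edges ⊆ u.edges) (htne : t.edges.Nonempty)
    (hproper : t.edges ≠ u.edges) :
    ∃ f' ∈ u.edges, f' ∉ t.edges ∧ ∃ v, v ∈ f' ∧ v ∈ t.verts := by
  obtain ⟨f'', hf''u, hf''t⟩ : ∃ f'', f'' ∈ u.edges ∧ f'' ∉ t.edges := by
    by_contra hno
    push_neg at hno
    exact hproper (Finset.Subset.antisymm hsub hno)
  obtain ⟨f₀, hf₀⟩ := htne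
  have walk : ∀ x y, Relation.ReflTransGen (adjE u.edges) x y →
      x ∈ t.edges → y ∉ t.edges →
      ∃ f' ∈ u.edges, f' ∉ t.edges ∧ ∃ v, v ∈ f' ∧ v ∈ t.verts := by
    intro x y hpath
    induction hpath with
    | refl => intro hx hy; exact absurd hx hy
    | @tail p q hxp hpq ih =>
      intro hx hy
      by_cases hp : p ∈ t.edges
      · obtain ⟨hpu, hqu, v, hvp, hvq⟩ := hpq
        exact ⟨q, hqu, hy, v, hvq, t.endpoints_mem p hp v hvp⟩
      · exact ih hx hp
  exact walk f₀ f'' (u.connE f₀ (hsub hf₀) f'' hf''u) hf₀ hf''t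

/-- If a tube of one maximal tubing carries positive weight in a common point of the two
simplices, it belongs to the other maximal tubing. -/
lemma supp_subset (hE : ∀ e ∈ E, ¬ e.IsDiag) {T₁ T₂ : Finset (Tube E)}
    (hT₁ : IsMaxTubing E T₁) (hT₂ : IsMaxTubing E T₂) (a b : Tube E → ℝ)
    (ha0 : ∀ t, 0 ≤ a t) (hb0 : ∀ t, 0 ≤ b t)
    (heq : ∑ t ∈ T₁, a t • hvec t = ∑ t ∈ T₂, b t • hvec t)
    {t : Tube E} (htT : t ∈ T₁) (htne : t.edges.Nonempty) (hat : 0 < a t) : t ∈ T₂ := by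
  classical
  -- equality of the edge-sums computed in the two tubings
  have hg : ∀ {e : Sym2 V}, e ∈ E →
      ∑ s ∈ T₁.filter (fun s => e ∈ s.edges), a s
        = ∑ s ∈ T₂.filter (fun s => e ∈ s.edges), b s := by
    intro e he
    obtain ⟨x, y, hxy, rfl⟩ := exists_ne_of_mem_E hE he
    have h₁ := combo_inr T₁ a hxy he
    have h₂ := combo_inr T₂ b hxy he
    rw [heq] at h₁
    rw [h₁] at h₂
    linarith
  set θ : ℝ := ∑ s ∈ T₁.filter (fun s => t.edges ⊆ s.edges), a s with hθ
  have htmem : t ∈ T₁.filter (fun s => t.edges ⊆ s.edges) :=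
    Finset.mem_filter.2 ⟨htT, subset_refl _⟩
  have hθpos : 0 < θ :=
    lt_of_lt_of_le hat (Finset.single_le_sum (fun s _ => ha0 s) htmem)
  -- (i) each edge of t has edge-sum at least θ
  have hi : ∀ f ∈ t.edges, θ ≤ ∑ s ∈ T₁.filter (fun s => f ∈ s.edges), a s := by
    intro f hf
    apply Finset.sum_le_sum_of_subset_of_nonneg
    · intro s hs
      obtain ⟨hsT, hsub⟩ := Finset.mem_filter.1 hs
      exact Finset.mem_filter.2 ⟨hsT, hsub hf⟩
    · intro s _ _; exact ha0 s
  -- (ii) each edge outside t touching t has edge-sum at most θ - a t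
  have hii : ∀ f ∈ E, f ∉ t.edges → (∃ v, v ∈ f ∧ v ∈ t.verts) →
      ∑ s ∈ T₁.filter (fun s => f ∈ s.edges), a s ≤ θ - a t := by
    intro f hfE hft ⟨v, hvf, hvt⟩
    have hsub : T₁.filter (fun s => f ∈ s.edges)
        ⊆ (T₁.filter (fun s => t.edges ⊆ s.edges)).erase t := by
      intro s hs
      obtain ⟨hsT, hfs⟩ := Finset.mem_filter.1 hs
      have hvs : v ∈ s.verts := s.endpoints_mem f hfs v hvf
      rcases nested_of_shared hT₁.1 hsT htT hvs hvt with h | h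
      · exact absurd (h hfs) hft
      · refine Finset.mem_erase.2 ⟨?_, Finset.mem_filter.2 ⟨hsT, h⟩⟩
        rintro rfl
        exact hft hfs
    calc ∑ s ∈ T₁.filter (fun s => f ∈ s.edges), a s
        ≤ ∑ s ∈ (T₁.filter (fun s => t.edges ⊆ s.edges)).erase t, a s :=
          Finset.sum_le_sum_of_subset_of_nonneg hsub (fun s _ _ => ha0 s)
      _ = θ - a t := by
          rw [hθ]
          rw [← Finset.add_sum_erase _ a htmem]
          ring
  -- there is a member of T₂ containing all of t's edges
  obtain ⟨M, hMT, -, hMsub⟩ := adjconst hT₂.1 (fun _ => True) t.connE htne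
    (fun f hf => by
      obtain ⟨s, hs, hfs⟩ := edge_covered hT₂ (t.edges_sub hf)
      exact ⟨s, hs, hfs, trivial⟩)
  -- the minimal such member u
  obtain ⟨f₀, hf₀⟩ := htne
  obtain ⟨u, huf, humin⟩ := chain_min (S := T₂.filter (fun s => t.edges ⊆ s.edges))
    (fun p hp q hq => by
      obtain ⟨hpT, hpsub⟩ := Finset.mem_filter.1 hp
      obtain ⟨hqT, hqsub⟩ := Finset.mem_filter.1 hq
      exact chain_of_mem_edge hT₂.1 hpT hqT (hpsub hf₀) (hqsub hf₀))
    ⟨M, Finset.mem_filter.2 ⟨hMT, hMsub⟩⟩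
  obtain ⟨huT, husub⟩ := Finset.mem_filter.1 huf
  by_cases hcase : t.edges = u.edges
  · rwa [Tube.eq_of_edges_eq ⟨f₀, hf₀⟩ hcase]
  -- proper inclusion: derive a contradiction
  exfalso
  -- find f* in t not covered by any member properly below u
  have hfstar : ∃ f ∈ t.edges, ∀ s ∈ T₂, f ∈ s.edges → ¬ s.edges ⊂ u.edges := by
    by_contra hno
    push_neg at hno
    obtain ⟨s, hsT, hPs, hssub⟩ := adjconst hT₂.1 (fun s => s.edges ⊂ u.edges)
      t.connE ⟨f₀, hf₀⟩ (fun f hf => by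
        obtain ⟨s, hsT, hfs, hlt⟩ := hno f hf
        exact ⟨s, hsT, hfs, hlt⟩)
    have : u.edges ⊆ s.edges := humin s (Finset.mem_filter.2 ⟨hsT, hssub⟩)
    exact hPs.2 this
  obtain ⟨fs, hfst, hfsmin⟩ := hfstar
  -- the members of T₂ containing f* are exactly those containing all of u
  set β : ℝ := ∑ s ∈ T₂.filter (fun s => u.edges ⊆ s.edges), b s with hβ
  have hfilter : T₂.filter (fun s => fs ∈ s.edges) = T₂.filter (fun s => u.edges ⊆ s.edges) := by
    ext s
    simp only [Finset.mem_filter, and_congr_right_iff]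
    intro hsT
    constructor
    · intro hfs
      rcases chain_of_mem_edge hT₂.1 hsT huT hfs (husub hfst) with h | h
      · rcases eq_or_ne s.edges u.edges with heq | hne
        · exact le_of_eq heq.symm
        · exact absurd (Finset.ssubset_iff_subset_ne.2 ⟨h, hne⟩) (hfsmin s hsT hfs)
      · exact h
    · intro hsub
      exact hsub (husub hfst)
  have hβ1 : ∑ s ∈ T₂.filter (fun s => fs ∈ s.edges), b s = β := by rw [hfilter]
  -- boundary edge of u against t
  obtain ⟨f', hf'u, hf't, v, hvf', hvt⟩ := boundary_edge husub ⟨f₀, hf₀⟩ hcase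
  have hf'E : f' ∈ E := u.edges_sub hf'u
  -- chain of inequalities
  have h1 : θ ≤ β := by
    calc θ ≤ ∑ s ∈ T₁.filter (fun s => fs ∈ s.edges), a s := hi fs hfst
    _ = ∑ s ∈ T₂.filter (fun s => fs ∈ s.edges), b s := hg (t.edges_sub hfst)
    _ = β := hβ1
  have h2 : β ≤ ∑ s ∈ T₂.filter (fun s => f' ∈ s.edges), b s := by
    apply Finset.sum_le_sum_of_subset_of_nonneg
    · intro s hs
      obtain ⟨hsT, hsub⟩ := Finset.mem_filter.1 hs
      exact Finset.mem_filter.2 ⟨hsT, hsub hf'u⟩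
    · intro s _ _; exact hb0 s
  have h3 : ∑ s ∈ T₁.filter (fun s => f' ∈ s.edges), a s ≤ θ - a t :=
    hii f' hf'E hf't ⟨v, hvf', hvt⟩
  have h4 := hg hf'E
  linarith

/-! ### Connected components of an edge set -/

open scoped Classical in
noncomputable def compOf (S : Finset (Sym2 V)) (f : Sym2 V) : Finset (Sym2 V) :=
  S.filter (fun f' => Relation.ReflTransGen (adjE S) f f')

open scoped Classical in
lemma mem_compOf {S : Finset (Sym2 V)} {f f' : Sym2 V} :
    f' ∈ compOf S f ↔ f' ∈ S ∧ Relation.ReflTransGen (adjE S) f f' := by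
  classical
  unfold compOf
  convert Finset.mem_filter using 2

lemma self_mem_compOf {S : Finset (Sym2 V)} {f : Sym2 V} (hf : f ∈ S) : f ∈ compOf S f :=
  mem_compOf.2 ⟨hf, Relation.ReflTransGen.refl⟩

lemma compOf_subset (S : Finset (Sym2 V)) (f : Sym2 V) : compOf S f ⊆ S :=
  fun _ hx => (mem_compOf.1 hx).1

lemma compOf_closed {S : Finset (Sym2 V)} {f g g' : Sym2 V} (hg : g ∈ compOf S f)
    (h : Relation.ReflTransGen (adjE S) g g') : g' ∈ compOf S f := by
  obtain ⟨hgS, hfg⟩ := mem_compOf.1 hg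
  have hg'S : g' ∈ S := by
    rcases (Relation.ReflTransGen.cases_tail h) with rfl | ⟨c, _, hc⟩
    · exact hgS
    · exact hc.2.1
  exact mem_compOf.2 ⟨hg'S, hfg.trans h⟩

lemma compOf_eq_of_mem {S : Finset (Sym2 V)} {f f' : Sym2 V} (hf : f ∈ S)
    (h : f' ∈ compOf S f) : compOf S f' = compOf S f := by
  obtain ⟨hf'S, hff'⟩ := mem_compOf.1 h
  have hsym : ∀ ⦃a b⦄, Relation.ReflTransGen (adjE S) a b → Relation.ReflTransGen (adjE S) b a :=
    fun _ _ h => (@Relation.ReflTransGen.stdSymm _ (adjE S) ⟨fun _ _ => adjE_symm⟩).symm _ _ h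
  ext g
  simp only [mem_compOf]
  constructor
  · rintro ⟨hgS, hp⟩
    exact ⟨hgS, hff'.trans hp⟩
  · rintro ⟨hgS, hp⟩
    exact ⟨hgS, (hsym hff').trans hp⟩

lemma compOf_connE (S : Finset (Sym2 V)) (f : Sym2 V) : ConnE (compOf S f) := by
  have hsym : ∀ ⦃a b⦄, Relation.ReflTransGen (adjE S) a b → Relation.ReflTransGen (adjE S) b a :=
    fun _ _ h => (@Relation.ReflTransGen.stdSymm _ (adjE S) ⟨fun _ _ => adjE_symm⟩).symm _ _ h
  have claim : ∀ x y, Relation.ReflTransGen (adjE S) x y →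
      Relation.ReflTransGen (adjE S) f x →
      Relation.ReflTransGen (adjE (compOf S f)) x y := by
    intro x y hxy
    induction hxy with
    | refl => intro _; exact Relation.ReflTransGen.refl
    | @tail p q hxp hpq ih =>
      intro hfx
      have hxC := ih hfx
      have hpC : p ∈ compOf S f := mem_compOf.2 ⟨hpq.1, hfx.trans hxp⟩
      have hqC : q ∈ compOf S f := mem_compOf.2 ⟨hpq.2.1, (hfx.trans hxp).tail hpq⟩
      exact hxC.tail ⟨hpC, hqC, hpq.2.2⟩
  intro g hg g' hg'
  obtain ⟨hgS, hfg⟩ := mem_compOf.1 hg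
  obtain ⟨hg'S, hfg'⟩ := mem_compOf.1 hg'
  exact claim g g' ((hsym hfg).trans hfg') hfg

lemma compOf_disjoint {S : Finset (Sym2 V)} {f₁ f₂ g₁ g₂ : Sym2 V} {v : V}
    (h₁ : g₁ ∈ compOf S f₁) (h₂ : g₂ ∈ compOf S f₂) (hf₁ : f₁ ∈ S) (hf₂ : f₂ ∈ S)
    (hv₁ : v ∈ g₁) (hv₂ : v ∈ g₂) : compOf S f₂ = compOf S f₁ := by
  have hadj : adjE S g₁ g₂ := ⟨(compOf_subset S f₁) h₁, (compOf_subset S f₂) h₂, v, hv₁, hv₂⟩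
  have hg₂ : g₂ ∈ compOf S f₁ := compOf_closed h₁ (Relation.ReflTransGen.single hadj)
  rw [← compOf_eq_of_mem hf₁ hg₂, ← compOf_eq_of_mem hf₂ h₂]

/-! ### The covering construction -/

open scoped Classical in
lemma cover_aux : ∀ (n : ℕ) (g : Sym2 V → ℝ), (∀ f, 0 ≤ g f) → (∀ f, g f ≠ 0 → f ∈ E) →
    (E.filter (fun f => g f ≠ 0)).card ≤ n →
    ∃ lam : Tube E → ℝ,
      (∀ t, 0 ≤ lam t) ∧
      (∀ t, lam t ≠ 0 → t.edges.Nonempty ∧ ∀ f ∈ t.edges, g f ≠ 0) ∧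
      (∀ t s, lam t ≠ 0 → lam s ≠ 0 →
          Disjoint t.verts s.verts ∨ t.edges ⊆ s.edges ∨ s.edges ⊆ t.edges) ∧
      (∀ f ∈ E, ∑ t ∈ Finset.univ.filter (fun t : Tube E => f ∈ t.edges), lam t = g f) ∧
      (∀ (v : V) (x : ℝ), 0 ≤ x → (∀ f, v ∈ f → g f ≤ x) →
          ∑ t ∈ Finset.univ.filter (fun t : Tube E => v ∈ t.verts ∧ t.edges.Nonempty),
            lam t ≤ x) := by
  intro n
  induction n with
  | zero =>
    intro g hg0 hgE hcard
    have hS : E.filter (fun f => g f ≠ 0) = ∅ := Finset.card_eq_zero.1 (Nat.le_zero.1 hcard)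
    have hz : ∀ f, g f = 0 := by
      intro f
      by_contra hf
      have hfE : f ∈ E := hgE f hf
      have : f ∈ E.filter (fun f => g f ≠ 0) := Finset.mem_filter.2 ⟨hfE, hf⟩
      rw [hS] at this
      simp at this
    refine ⟨0, fun t => le_refl 0, fun t ht => absurd rfl ht, fun t s ht => absurd rfl ht,
      fun f hf => ?_, fun v x hx _ => ?_⟩
    · simp [hz f]
    · simpa using hx
  | succ n ih =>
    intro g hg0 hgE hcard
    set S : Finset (Sym2 V) := E.filter (fun f => g f ≠ 0) with hSdef
    rcases S.eq_empty_or_nonempty with hS | hSne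
    · have hz : ∀ f, g f = 0 := by
        intro f
        by_contra hf
        have : f ∈ S := Finset.mem_filter.2 ⟨hgE f hf, hf⟩
        rw [hS] at this
        simp at this
      refine ⟨0, fun t => le_refl 0, fun t ht => absurd rfl ht, fun t s ht => absurd rfl ht,
        fun f hf => ?_, fun v x hx _ => ?_⟩
      · simp [hz f]
      · simpa using hx
    have hSsubE : S ⊆ E := Finset.filter_subset _ _
    have hSpos : ∀ f ∈ S, 0 < g f := by
      intro f hf
      exact lt_of_le_of_ne (hg0 f) (Ne.symm (Finset.mem_filter.1 hf).2)
    set θ : ℝ := S.inf' hSne g with hθdef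
    have hθpos : 0 < θ := (Finset.lt_inf'_iff hSne).2 (fun f hf => hSpos f hf)
    have hθle : ∀ f ∈ S, θ ≤ g f := fun f hf => Finset.inf'_le g hf
    set g' : Sym2 V → ℝ := fun f => if g f = 0 then 0 else g f - θ with hg'def
    have hg'g : ∀ f, g' f ≠ 0 → g f ≠ 0 := by
      intro f hf
      by_contra h0
      apply hf
      simp [hg'def, h0]
    have hg'0 : ∀ f, 0 ≤ g' f := by
      intro f
      simp only [hg'def]
      split
      · exact le_refl 0
      · next h0 =>
        have : f ∈ S := Finset.mem_filter.2 ⟨hgE f h0, h0⟩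
        linarith [hθle f this]
    have hg'le : ∀ f, g' f ≤ g f := by
      intro f
      simp only [hg'def]
      split
      · next h0 => rw [h0]
      · linarith
    have hg'E : ∀ f, g' f ≠ 0 → f ∈ E := fun f hf => hgE f (hg'g f hf)
    -- the support shrinks
    obtain ⟨fmin, hfminS, hfmineq⟩ := Finset.exists_mem_eq_inf' hSne g
    have hsupp' : E.filter (fun f => g' f ≠ 0) ⊆ S.erase fmin := by
      intro f hf
      obtain ⟨hfE, hfne⟩ := Finset.mem_filter.1 hf
      have hfS : f ∈ S := Finset.mem_filter.2 ⟨hfE, hg'g f hfne⟩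
      refine Finset.mem_erase.2 ⟨?_, hfS⟩
      rintro rfl
      apply hfne
      simp only [hg'def]
      rw [if_neg (Finset.mem_filter.1 hfS).2, ← hfmineq]
      ring
    have hcard' : (E.filter (fun f => g' f ≠ 0)).card ≤ n := by
      have h1 : (S.erase fmin).card = S.card - 1 := Finset.card_erase_of_mem hfminS
      have h2 : 1 ≤ S.card := Finset.card_pos.2 hSne
      have h3 := Finset.card_le_card hsupp'
      have h4 : S.card ≤ n + 1 := hcard
      omega
    obtain ⟨lam', hl0, hlsupp, hlcompat, hlsum, hlvert⟩ := ih g' hg'0 hg'E hcard'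
    -- the stage-one component tubes
    set P : Tube E → Prop := fun t => ∃ f ∈ S, t.edges = compOf S f with hPdef
    have hPne : ∀ t, P t → t.edges.Nonempty := by
      rintro t ⟨f, hfS, hedge⟩
      exact ⟨f, hedge ▸ self_mem_compOf hfS⟩
    have hPS : ∀ t, P t → t.edges ⊆ S := by
      rintro t ⟨f, hfS, hedge⟩
      rw [hedge]
      exact compOf_subset S f
    -- edges of recursive tubes lie in S
    have hrecS : ∀ t, lam' t ≠ 0 → t.edges ⊆ S := by
      intro t ht f hf
      have := (hlsupp t ht).2 f hf
      exact Finset.mem_filter.2 ⟨hg'E f this, hg'g f this⟩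
    -- a recursive tube meeting a component tube is contained in it
    have hsub_comp : ∀ t, lam' t ≠ 0 → ∀ s, P s → ¬ Disjoint t.verts s.verts →
        t.edges ⊆ s.edges := by
      intro t ht s hPs hd
      obtain ⟨v, hvt, hvs⟩ := Finset.not_disjoint_iff.1 hd
      obtain ⟨f, hfS, hedge⟩ := hPs
      have htne : t.edges.Nonempty := (hlsupp t ht).1
      obtain ⟨gt, hgt, hvgt⟩ := (Tube.mem_verts_iff t htne).1 hvt
      obtain ⟨gs, hgs, hvgs⟩ := (Tube.mem_verts_iff s (hPne s ⟨f, hfS, hedge⟩)).1 hvs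
      rw [hedge] at hgs
      have hgtS : gt ∈ S := hrecS t ht hgt
      have hgtC : gt ∈ compOf S f := compOf_closed hgs
        (Relation.ReflTransGen.single ⟨(compOf_subset S f) hgs, hgtS, v, hvgs, hvgt⟩)
      intro e he
      have hpath : Relation.ReflTransGen (adjE t.edges) gt e := t.connE gt hgt e he
      have hpath' : Relation.ReflTransGen (adjE S) gt e :=
        Relation.ReflTransGen.mono (fun _ _ hab => adjE_mono (hrecS t ht) hab) _ _ hpath
      rw [hedge]
      exact compOf_closed hgtC hpath'
    refine ⟨fun t => lam' t + if P t then θ else 0, ?_, ?_, ?_, ?_, ?_⟩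
    · intro t
      apply add_nonneg (hl0 t)
      split
      · exact hθpos.le
      · exact le_refl 0
    · intro t ht
      by_cases hlt : lam' t ≠ 0
      · exact ⟨(hlsupp t hlt).1, fun f hf => hg'g f ((hlsupp t hlt).2 f hf)⟩
      · push_neg at hlt
        have hPt : P t := by
          by_contra hPt
          apply ht
          simp [hlt, hPt]
        exact ⟨hPne t hPt, fun f hf => (Finset.mem_filter.1 ((hPS t hPt) hf)).2⟩
    · -- compatibility
      intro t s ht hs
      have hcase : ∀ r, lam' r + (if P r then θ else 0) ≠ 0 → lam' r ≠ 0 ∨ P r := by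
        intro r hr
        by_cases h1 : lam' r ≠ 0
        · exact Or.inl h1
        · push_neg at h1
          right
          by_contra hP
          exact hr (by simp [h1, hP])
      by_cases hd : Disjoint t.verts s.verts
      · exact Or.inl hd
      rcases hcase t ht with h1 | h1 <;> rcases hcase s hs with h2 | h2
      · exact hlcompat t s h1 h2
      · exact Or.inr (Or.inl (hsub_comp t h1 s h2 hd))
      · exact Or.inr (Or.inr (hsub_comp s h2 t h1 (fun hdd => hd hdd.symm)))
      · -- both are component tubes
        obtain ⟨v, hvt, hvs⟩ := Finset.not_disjoint_iff.1 hd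
        obtain ⟨f₁, hf₁S, he₁⟩ := h1
        obtain ⟨f₂, hf₂S, he₂⟩ := h2
        obtain ⟨gt, hgt, hvgt⟩ := (Tube.mem_verts_iff t (hPne t ⟨f₁, hf₁S, he₁⟩)).1 hvt
        obtain ⟨gs, hgs, hvgs⟩ := (Tube.mem_verts_iff s (hPne s ⟨f₂, hf₂S, he₂⟩)).1 hvs
        rw [he₁] at hgt
        rw [he₂] at hgs
        have := compOf_disjoint hgt hgs hf₁S hf₂S hvgt hvgs
        exact Or.inr (Or.inl (by rw [he₁, he₂, this]))
    · -- edge sums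
      intro f hfE
      rw [Finset.sum_add_distrib, hlsum f hfE]
      have hθsum : ∑ t ∈ Finset.univ.filter (fun t : Tube E => f ∈ t.edges),
          (if P t then θ else 0)
          = ∑ t ∈ (Finset.univ.filter (fun t : Tube E => f ∈ t.edges)).filter P, θ :=
        (Finset.sum_filter _ _).symm
      by_cases hgf : g f = 0
      · have hempty : (Finset.univ.filter (fun t : Tube E => f ∈ t.edges)).filter P = ∅ := by
          rw [Finset.eq_empty_iff_forall_notMem]
          intro t ht
          obtain ⟨ht1, hPt⟩ := Finset.mem_filter.1 ht
          have hfS : f ∈ S := (hPS t hPt) (Finset.mem_filter.1 ht1).2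
          exact (Finset.mem_filter.1 hfS).2 hgf
        rw [hθsum, hempty]
        simp [hg'def, hgf]
      · have hfS : f ∈ S := Finset.mem_filter.2 ⟨hfE, hgf⟩
        set t₀ : Tube E := mkTube (compOf S f) ((compOf_subset S f).trans hSsubE)
          ⟨f, self_mem_compOf hfS⟩ (compOf_connE S f) with ht₀def
        have hsingle : (Finset.univ.filter (fun t : Tube E => f ∈ t.edges)).filter P
            = {t₀} := by
          ext t
          simp only [Finset.mem_filter, Finset.mem_univ, true_and, Finset.mem_singleton]
          constructor
          · rintro ⟨hft, f₁, hf₁S, he₁⟩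
            have hfC : f ∈ compOf S f₁ := he₁ ▸ hft
            have hcomp := compOf_eq_of_mem hf₁S hfC
            apply Tube.eq_of_edges_eq ⟨f, hft⟩
            rw [he₁, ← hcomp]
            rfl
          · rintro rfl
            exact ⟨self_mem_compOf hfS, f, hfS, rfl⟩
        rw [hθsum, hsingle, Finset.sum_singleton]
        simp only [hg'def]
        rw [if_neg hgf]
        ring
    · -- vertex sums
      intro v x hx0 hbound
      rw [Finset.sum_add_distrib]
      have hθsum : ∑ t ∈ Finset.univ.filter
            (fun t : Tube E => v ∈ t.verts ∧ t.edges.Nonempty), (if P t then θ else 0)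
          = ∑ t ∈ (Finset.univ.filter
            (fun t : Tube E => v ∈ t.verts ∧ t.edges.Nonempty)).filter P, θ :=
        (Finset.sum_filter _ _).symm
      by_cases hvS : ∃ f ∈ S, v ∈ f
      · obtain ⟨f₁, hf₁S, hvf₁⟩ := hvS
        set t₀ : Tube E := mkTube (compOf S f₁) ((compOf_subset S f₁).trans hSsubE)
          ⟨f₁, self_mem_compOf hf₁S⟩ (compOf_connE S f₁) with ht₀def
        have hsingle : (Finset.univ.filter
            (fun t : Tube E => v ∈ t.verts ∧ t.edges.Nonempty)).filter P = {t₀} := by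
          ext t
          simp only [Finset.mem_filter, Finset.mem_univ, true_and, Finset.mem_singleton]
          constructor
          · rintro ⟨⟨hvt, htne⟩, f₂, hf₂S, he₂⟩
            obtain ⟨gt, hgt, hvgt⟩ := (Tube.mem_verts_iff t htne).1 hvt
            rw [he₂] at hgt
            have hcomp := compOf_disjoint (self_mem_compOf hf₁S) hgt hf₁S hf₂S hvf₁ hvgt
            apply Tube.eq_of_edges_eq htne
            rw [he₂, hcomp]
            rfl
          · rintro rfl
            refine ⟨⟨?_, ⟨f₁, self_mem_compOf hf₁S⟩⟩, f₁, hf₁S, rfl⟩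
            exact mkTube_mem_verts.2 ⟨f₁, self_mem_compOf hf₁S, hvf₁⟩
        have hrec : ∑ t ∈ Finset.univ.filter
            (fun t : Tube E => v ∈ t.verts ∧ t.edges.Nonempty), lam' t ≤ x - θ := by
          apply hlvert v (x - θ)
          · have := hbound f₁ hvf₁
            have := hθle f₁ hf₁S
            linarith
          · intro f hvf
            simp only [hg'def]
            split
            · next h0 =>
              have := hbound f₁ hvf₁
              have := hθle f₁ hf₁S
              linarith
            · have := hbound f hvf
              linarith
        rw [hθsum, hsingle, Finset.sum_singleton]
        linarith
      · push_neg at hvS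
        have hempty : (Finset.univ.filter
            (fun t : Tube E => v ∈ t.verts ∧ t.edges.Nonempty)).filter P = ∅ := by
          rw [Finset.eq_empty_iff_forall_notMem]
          intro t ht
          obtain ⟨ht1, hPt⟩ := Finset.mem_filter.1 ht
          obtain ⟨hvt, htne⟩ := (Finset.mem_filter.1 ht1).2
          obtain ⟨gt, hgt, hvgt⟩ := (Tube.mem_verts_iff t htne).1 hvt
          exact hvS gt ((hPS t hPt) hgt) hvgt
        have hrec : ∑ t ∈ Finset.univ.filter
            (fun t : Tube E => v ∈ t.verts ∧ t.edges.Nonempty), lam' t ≤ x := by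
          apply hlvert v x hx0
          intro f hvf
          exact le_trans (hg'le f) (hbound f hvf)
        rw [hθsum, hempty]
        simpa using hrec

/-! ### Covering: every point of the dual cosmological polytope is in some simplex -/

lemma cover_point (hE : ∀ e ∈ E, ¬ e.IsDiag) (hiso : ∀ v : V, ∃ e ∈ E, v ∈ e)
    {z : Coord E → ℝ} (hz : z ∈ dualCosmo E) :
    ∃ T : Finset (Tube E), IsMaxTubing E T ∧
      z ∈ convexHull ℝ (zvec '' (T : Set (Tube E))) := by
  classical
  obtain ⟨c, hc0, hc1, hzc⟩ := (mem_dualCosmo_iff z).1 hz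
  set c' : Tube E → ℝ := fun t => c t * (ell t)⁻¹ with hc'
  have hc'0 : ∀ t, 0 ≤ c' t := fun t => mul_nonneg (hc0 t) (inv_nonneg.2 (ell_pos t).le)
  have hzc' : z = ∑ t, c' t • hvec t := by
    rw [hzc]
    apply Finset.sum_congr rfl
    intro t _
    rw [zvec_eq_smul, smul_smul]
  set g : Sym2 V → ℝ := fun f =>
    if f ∈ E then ∑ t ∈ Finset.univ.filter (fun t : Tube E => f ∈ t.edges), c' t else 0
    with hgdef
  have hg0 : ∀ f, 0 ≤ g f := by
    intro f
    simp only [hgdef]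
    split
    · exact Finset.sum_nonneg (fun t _ => hc'0 t)
    · exact le_refl 0
  have hgE : ∀ f, g f ≠ 0 → f ∈ E := by
    intro f hf
    by_contra hfe
    exact hf (by rw [hgdef]; simp [hfe])
  obtain ⟨lam, hl0, hlsupp, hlcompat, hlsum, hlvert⟩ :=
    cover_aux (E.filter (fun f => g f ≠ 0)).card g hg0 hgE le_rfl
  have hzx : ∀ v : V, z (Sum.inl v)
      = ∑ t ∈ Finset.univ.filter (fun t : Tube E => v ∈ t.verts), c' t := by
    intro v
    rw [hzc', combo_inl]
  have hzx0 : ∀ v, 0 ≤ z (Sum.inl v) := by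
    intro v
    rw [hzx v]
    exact Finset.sum_nonneg (fun t _ => hc'0 t)
  have hgb : ∀ (v : V) (f : Sym2 V), v ∈ f → g f ≤ z (Sum.inl v) := by
    intro v f hvf
    by_cases hf : f ∈ E
    · rw [hgdef]
      simp only [hf, if_true]
      rw [hzx v]
      apply Finset.sum_le_sum_of_subset_of_nonneg
      · intro t ht
        obtain ⟨-, hft⟩ := Finset.mem_filter.1 ht
        exact Finset.mem_filter.2 ⟨Finset.mem_univ t, t.endpoints_mem f hft v hvf⟩
      · intro t _ _; exact hc'0 t
    · rw [hgdef]
      simp only [hf, if_false]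
      exact hzx0 v
  set μ : V → ℝ := fun v => z (Sum.inl v)
    - ∑ t ∈ Finset.univ.filter (fun t : Tube E => v ∈ t.verts ∧ t.edges.Nonempty), lam t
    with hμdef
  have hμ0 : ∀ v, 0 ≤ μ v := by
    intro v
    have := hlvert v (z (Sum.inl v)) (hzx0 v) (fun f hvf => hgb v f hvf)
    rw [hμdef]
    simp only
    linarith
  set sV : Tube E → V := fun t => t.nonempty.choose with hsVdef
  have hsV_sing : ∀ v : V, sV (singTube hiso v) = v := by
    intro v
    have h := (singTube hiso v).nonempty.choose_spec
    exact Finset.mem_singleton.1 h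
  set lamF : Tube E → ℝ := fun t => if t.edges = ∅ then μ (sV t) else lam t with hlamFdef
  have hlamF0 : ∀ t, 0 ≤ lamF t := by
    intro t
    rw [hlamFdef]
    simp only
    split
    · exact hμ0 _
    · exact hl0 t
  have hlamF_ne : ∀ t : Tube E, t.edges ≠ ∅ → lamF t = lam t := by
    intro t ht
    rw [hlamFdef]
    simp [ht]
  have hsing_filter : ∀ v : V,
      Finset.univ.filter (fun t : Tube E => v ∈ t.verts ∧ t.edges = ∅)
        = {singTube hiso v} := by
    intro v
    ext t
    simp only [Finset.mem_filter, Finset.mem_univ, true_and, Finset.mem_singleton]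
    constructor
    · rintro ⟨hv, he⟩
      obtain ⟨w, hw, hverts⟩ := eq_singTube hiso he
      rw [hverts, Finset.mem_singleton] at hv
      rw [hw, hv]
    · rintro rfl
      exact ⟨by simp, rfl⟩
  have hx : ∀ v : V, (∑ t, lamF t • hvec t) (Sum.inl v) = z (Sum.inl v) := by
    intro v
    rw [combo_inl]
    have hsplit := Finset.sum_filter_add_sum_filter_not
      (Finset.univ.filter (fun t : Tube E => v ∈ t.verts)) (fun t => t.edges = ∅) lamF
    have h1 : (Finset.univ.filter (fun t : Tube E => v ∈ t.verts)).filter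
        (fun t => t.edges = ∅) = {singTube hiso v} := by
      rw [Finset.filter_filter]
      exact hsing_filter v
    have h2 : (Finset.univ.filter (fun t : Tube E => v ∈ t.verts)).filter
        (fun t => ¬ t.edges = ∅)
        = Finset.univ.filter (fun t : Tube E => v ∈ t.verts ∧ t.edges.Nonempty) := by
      rw [Finset.filter_filter]
      apply Finset.filter_congr
      intro t _
      rw [Finset.nonempty_iff_ne_empty]
    have h3 : lamF (singTube hiso v) = μ v := by
      rw [hlamFdef]
      simp [hsV_sing v]
    have h4 : ∑ t ∈ Finset.univ.filter
          (fun t : Tube E => v ∈ t.verts ∧ t.edges.Nonempty), lamF t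
        = ∑ t ∈ Finset.univ.filter
          (fun t : Tube E => v ∈ t.verts ∧ t.edges.Nonempty), lam t := by
      apply Finset.sum_congr rfl
      intro t ht
      exact hlamF_ne t (Finset.nonempty_iff_ne_empty.1 (Finset.mem_filter.1 ht).2.2)
    rw [← hsplit, h1, h2, Finset.sum_singleton, h3, h4, hμdef]
    simp only
    ring
  have hy : ∀ (e : Sym2 V) (he : e ∈ E),
      (∑ t, lamF t • hvec t) (Sum.inr ⟨e, he⟩) = z (Sum.inr ⟨e, he⟩) := by
    intro e he
    obtain ⟨u, w, hne, rfl⟩ := exists_ne_of_mem_E hE he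
    have hA := combo_inr Finset.univ lamF hne he
    have hB := combo_inr Finset.univ c' hne he
    rw [← hzc'] at hB
    have hfe : ∑ t ∈ Finset.univ.filter (fun t : Tube E => s(u, w) ∈ t.edges), lamF t
        = ∑ t ∈ Finset.univ.filter (fun t : Tube E => s(u, w) ∈ t.edges), lam t := by
      apply Finset.sum_congr rfl
      intro t ht
      exact hlamF_ne t (Finset.nonempty_iff_ne_empty.1 ⟨_, (Finset.mem_filter.1 ht).2⟩)
    have hge := hlsum (s(u, w)) he
    have hgc : g s(u, w)
        = ∑ t ∈ Finset.univ.filter (fun t : Tube E => s(u, w) ∈ t.edges), c' t := by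
      rw [hgdef]
      simp [he]
    rw [hA, hx u, hx w, hfe, hge, hgc]
    linarith [hB]
  have hzF : z = ∑ t, lamF t • hvec t := by
    funext i
    rcases i with v | e
    · exact (hx v).symm
    · obtain ⟨e, he⟩ := e
      exact (hy e he).symm
  set T₀ : Finset (Tube E) := Finset.univ.filter (fun t => lamF t ≠ 0) with hT₀def
  have hT₀mem : ∀ {t}, t ∈ T₀ → lamF t ≠ 0 := fun ht => (Finset.mem_filter.1 ht).2
  have htub : IsTubing E T₀ := by
    intro t₁ h₁ t₂ h₂
    by_cases he₁ : t₁.edges = ∅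
    · exact Or.inr (Or.inl (by rw [he₁]; exact Finset.empty_subset _))
    by_cases he₂ : t₂.edges = ∅
    · exact Or.inr (Or.inr (by rw [he₂]; exact Finset.empty_subset _))
    have hl₁ : lam t₁ ≠ 0 := by rw [← hlamF_ne t₁ he₁]; exact hT₀mem h₁
    have hl₂ : lam t₂ ≠ 0 := by rw [← hlamF_ne t₂ he₂]; exact hT₀mem h₂
    exact hlcompat t₁ t₂ hl₁ hl₂
  obtain ⟨T, hTmax, hT₀T⟩ := exists_max_tubing htub
  have hvanish : ∀ t : Tube E, t ∉ T → lamF t = 0 := by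
    intro t ht
    by_contra h0
    exact ht (hT₀T (Finset.mem_filter.2 ⟨Finset.mem_univ t, h0⟩))
  have hz1 : ∑ i, z i = 1 := by
    rw [hzc, sum_coords_combo]
    exact hc1
  have hsum_univ : ∑ t, lamF t * ell t = 1 := by
    rw [← hz1, hzF]
    simp only [Finset.sum_apply, Pi.smul_apply, smul_eq_mul]
    rw [Finset.sum_comm]
    apply Finset.sum_congr rfl
    intro t _
    rw [ell, Finset.mul_sum]
  refine ⟨T, hTmax, (mem_hull_iff T z).2 ⟨fun t => lamF t * ell t, ?_, ?_, ?_, ?_⟩⟩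
  · intro t
    exact mul_nonneg (hlamF0 t) (ell_pos t).le
  · intro t ht
    by_contra hT
    exact ht (by simp only [hvanish t hT, zero_mul])
  · rw [Finset.sum_subset (Finset.subset_univ T)]
    · exact hsum_univ
    · intro t _ ht
      rw [hvanish t ht]
      ring
  · rw [hzF]
    rw [← Finset.sum_subset (Finset.subset_univ T)
      (f := fun t => lamF t • hvec t)]
    · apply Finset.sum_congr rfl
      intro t _
      rw [zvec_eq_smul, smul_smul, mul_assoc, mul_inv_cancel₀ (ell_pos t).ne', mul_one]
    · intro t _ ht
      rw [hvanish t ht, zero_smul]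

/-! ### Intersections of the simplices -/

lemma inter_hulls_eq (hE : ∀ e ∈ E, ¬ e.IsDiag) (hiso : ∀ v : V, ∃ e ∈ E, v ∈ e)
    {T₁ T₂ : Finset (Tube E)} (hT₁ : IsMaxTubing E T₁) (hT₂ : IsMaxTubing E T₂) :
    convexHull ℝ (zvec '' (T₁ : Set (Tube E))) ∩ convexHull ℝ (zvec '' (T₂ : Set (Tube E)))
      = convexHull ℝ (zvec '' ((T₁ ∩ T₂ : Finset (Tube E)) : Set (Tube E))) := by
  classical
  apply Set.Subset.antisymm
  · rintro z ⟨hz₁, hz₂⟩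
    obtain ⟨a, ha0, hasupp, ha1, haz⟩ := (mem_hull_iff T₁ z).1 hz₁
    obtain ⟨b, hb0, hbsupp, hb1, hbz⟩ := (mem_hull_iff T₂ z).1 hz₂
    have e1 : ∀ (S : Finset (Tube E)) (w : Tube E → ℝ),
        ∑ t ∈ S, (w t * (ell t)⁻¹) • hvec t = ∑ t ∈ S, w t • zvec t :=
      fun S w => Finset.sum_congr rfl (fun t _ => by rw [zvec_eq_smul, smul_smul])
    have heq : ∑ t ∈ T₁, (a t * (ell t)⁻¹) • hvec t
        = ∑ t ∈ T₂, (b t * (ell t)⁻¹) • hvec t := by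
      rw [e1, e1, ← haz, ← hbz]
    have hsupp12 : ∀ t, a t ≠ 0 → t ∈ T₁ ∩ T₂ := by
      intro t hat
      have ht1 : t ∈ T₁ := hasupp t hat
      refine Finset.mem_inter.2 ⟨ht1, ?_⟩
      by_cases hte : t.edges = ∅
      · obtain ⟨v, htv, -⟩ := eq_singTube hiso hte
        rw [htv]
        exact singTube_mem_max hiso hT₂ v
      · apply supp_subset hE hT₁ hT₂ (fun t => a t * (ell t)⁻¹) (fun t => b t * (ell t)⁻¹)
          (fun t => mul_nonneg (ha0 t) (inv_nonneg.2 (ell_pos t).le))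
          (fun t => mul_nonneg (hb0 t) (inv_nonneg.2 (ell_pos t).le))
          heq ht1 (Finset.nonempty_iff_ne_empty.2 hte)
        exact mul_pos (lt_of_le_of_ne (ha0 t) (Ne.symm hat)) (inv_pos.2 (ell_pos t))
    refine (mem_hull_iff (T₁ ∩ T₂) z).2 ⟨a, ha0, hsupp12, ?_, ?_⟩
    · rw [Finset.sum_subset (Finset.inter_subset_left), ha1]
      intro t ht1 htn
      by_contra h0
      exact htn (hsupp12 t h0)
    · rw [haz]
      apply (Finset.sum_subset (Finset.inter_subset_left) _).symm
      intro t ht1 htn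
      have : a t = 0 := by
        by_contra h0
        exact htn (hsupp12 t h0)
      rw [this, zero_smul]
  · intro z hzmem
    have h1 : zvec '' ((T₁ ∩ T₂ : Finset (Tube E)) : Set (Tube E))
        ⊆ zvec '' (T₁ : Set (Tube E)) := by
      apply Set.image_mono
      rw [Finset.coe_inter]
      exact Set.inter_subset_left
    have h2 : zvec '' ((T₁ ∩ T₂ : Finset (Tube E)) : Set (Tube E))
        ⊆ zvec '' (T₂ : Set (Tube E)) := by
      apply Set.image_mono
      rw [Finset.coe_inter]
      exact Set.inter_subset_right
    exact ⟨convexHull_mono h1 hzmem, convexHull_mono h2 hzmem⟩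

lemma face_lemma (hE : ∀ e ∈ E, ¬ e.IsDiag) (hiso : ∀ v : V, ∃ e ∈ E, v ∈ e)
    {T₁ T₂ : Finset (Tube E)} (hT₁ : IsMaxTubing E T₁) (hT₂ : IsMaxTubing E T₂) :
    IsFace (convexHull ℝ (zvec '' (T₁ : Set (Tube E)))
        ∩ convexHull ℝ (zvec '' (T₂ : Set (Tube E))))
      (convexHull ℝ (zvec '' (T₁ : Set (Tube E)))) := by
  classical
  rcases T₁.eq_empty_or_nonempty with hT₁e | hT₁ne
  · exact Or.inr (Or.inl (by simp [hT₁e, convexHull_empty]))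
  haveI : Nonempty {t // t ∈ T₁} := ⟨⟨hT₁ne.choose, hT₁ne.choose_spec⟩⟩
  have hcard : Fintype.card {t // t ∈ T₁} = Module.finrank ℝ (Coord E → ℝ) := by
    rw [Module.finrank_pi, Fintype.card_coe, maxTubing_card hE hiso hT₁]
    have : Fintype.card (Coord E) = Fintype.card V + Fintype.card {e : Sym2 V // e ∈ E} :=
      Fintype.card_sum
    rw [this, Fintype.card_coe]
  set B := basisOfLinearIndependentOfCardEqFinrank
    (hvec_linearIndependent hE hiso hT₁) hcard with hB
  set φ := B.constr (S := ℝ) (fun i => if i.1 ∈ T₂ then 0 else ell i.1) with hφ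
  have hφh : ∀ (t : Tube E) (ht : t ∈ T₁), φ (hvec t) = if t ∈ T₂ then 0 else ell t := by
    intro t ht
    have hBt : hvec t = B ⟨t, ht⟩ := by
      rw [hB, coe_basisOfLinearIndependentOfCardEqFinrank]
    rw [hBt, hφ, Module.Basis.constr_basis]
  have hφz : ∀ t : Tube E, t ∈ T₁ → φ (zvec t) = if t ∈ T₂ then 0 else 1 := by
    intro t ht
    rw [zvec_eq_smul, map_smul, hφh t ht]
    by_cases h2 : t ∈ T₂
    · simp [h2]
    · simp only [h2, if_false, smul_eq_mul]
      rw [inv_mul_cancel₀ (ell_pos t).ne']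
  set avec : Coord E → ℝ := fun i => φ (Pi.single i 1) with havec
  have hdot : ∀ x : Coord E → ℝ, dot avec x = φ x := by
    intro x
    have hxdecomp : x = ∑ i, Pi.single i (x i) := (Finset.univ_sum_single x).symm
    rw [dot]
    conv_rhs => rw [hxdecomp]
    rw [map_sum]
    apply Finset.sum_congr rfl
    intro i _
    have hsingle : Pi.single i (x i) = x i • (Pi.single i 1 : Coord E → ℝ) := by
      funext j
      by_cases hij : j = i
      · subst hij; simp
      · simp [Pi.single_eq_of_ne hij]
    rw [hsingle, map_smul, smul_eq_mul]
    exact mul_comm _ _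
  right; right
  refine ⟨avec, 0, ?_, ?_⟩
  · intro x hx
    obtain ⟨w, hw0, hwsupp, hw1, rfl⟩ := (mem_hull_iff T₁ x).1 hx
    rw [hdot, map_sum]
    apply Finset.sum_nonneg
    intro t ht
    rw [map_smul, smul_eq_mul, hφz t ht]
    by_cases h2 : t ∈ T₂ <;> simp [h2, hw0 t]
  · rw [inter_hulls_eq hE hiso hT₁ hT₂]
    ext x
    simp only [Set.mem_setOf_eq]
    constructor
    · intro hx
      have hx1 : x ∈ convexHull ℝ (zvec '' (T₁ : Set (Tube E))) := by
        apply convexHull_mono _ hx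
        apply Set.image_mono
        rw [Finset.coe_inter]
        exact Set.inter_subset_left
      refine ⟨hx1, ?_⟩
      obtain ⟨w, hw0, hwsupp, hw1, rfl⟩ := (mem_hull_iff (T₁ ∩ T₂) x).1 hx
      rw [hdot, map_sum]
      apply Finset.sum_eq_zero
      intro t ht
      rw [map_smul, smul_eq_mul,
        hφz t (Finset.mem_of_mem_inter_left ht),
        if_pos (Finset.mem_of_mem_inter_right ht)]
      ring
    · rintro ⟨hx1, hx0⟩
      obtain ⟨w, hw0, hwsupp, hw1, rfl⟩ := (mem_hull_iff T₁ x).1 hx1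
      rw [hdot, map_sum] at hx0
      have hterm : ∀ t ∈ T₁, 0 ≤ φ (w t • zvec t) := by
        intro t ht
        rw [map_smul, smul_eq_mul, hφz t ht]
        by_cases h2 : t ∈ T₂ <;> simp [h2, hw0 t]
      have hall := (Finset.sum_eq_zero_iff_of_nonneg hterm).1 hx0
      have hw2 : ∀ t, w t ≠ 0 → t ∈ T₁ ∩ T₂ := by
        intro t hwt
        have ht1 := hwsupp t hwt
        refine Finset.mem_inter.2 ⟨ht1, ?_⟩
        by_contra ht2
        have h := hall t ht1
        rw [map_smul, smul_eq_mul, hφz t ht1, if_neg ht2, mul_one] at h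
        exact hwt h
      refine (mem_hull_iff (T₁ ∩ T₂) _).2 ⟨w, hw0, hw2, ?_, ?_⟩
      · rw [Finset.sum_subset (Finset.inter_subset_left), hw1]
        intro t ht1 htn
        by_contra h0
        exact htn (hw2 t h0)
      · apply (Finset.sum_subset (Finset.inter_subset_left) _).symm
        intro t ht1 htn
        have h0 : w t = 0 := by
          by_contra h0
          exact htn (hw2 t h0)
        rw [h0, zero_smul]
end Aux
/-- The simplices `σ_T = conv{ z_t : t ∈ T }`, for `T` a maximal
tubing of `G`, form a triangulation of the dual cosmological polytope `C_G°`: each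
`σ_T` is a simplex of dimension `|V|+|E|-1` (its `|V|+|E|` vertices are affinely
independent), the union of the `σ_T` is `C_G°`, and any two of them intersect in the
convex hull of their common vertices, which is a common face. -/
theorem statement11 (E : Finset (Sym2 V)) (hE : ∀ e ∈ E, ¬ e.IsDiag)
    (hiso : ∀ v : V, ∃ e ∈ E, v ∈ e) :
    (∀ T : Finset (Tube E), IsMaxTubing E T →
        T.card = Fintype.card V + E.card ∧
        AffineIndependent ℝ (fun t : {t // t ∈ T} => zvec t.1)) ∧
    (⋃ T ∈ {T : Finset (Tube E) | IsMaxTubing E T},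
        convexHull ℝ (zvec '' (T : Set (Tube E)))) = dualCosmo E ∧
    (∀ T₁ T₂ : Finset (Tube E), IsMaxTubing E T₁ → IsMaxTubing E T₂ →
        convexHull ℝ (zvec '' (T₁ : Set (Tube E))) ∩
            convexHull ℝ (zvec '' (T₂ : Set (Tube E)))
          = convexHull ℝ (zvec '' ((T₁ ∩ T₂ : Finset (Tube E)) : Set (Tube E))) ∧
        IsFace
          (convexHull ℝ (zvec '' (T₁ : Set (Tube E))) ∩
            convexHull ℝ (zvec '' (T₂ : Set (Tube E))))
          (convexHull ℝ (zvec '' (T₁ : Set (Tube E)))) ∧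
        IsFace
          (convexHull ℝ (zvec '' (T₁ : Set (Tube E))) ∩
            convexHull ℝ (zvec '' (T₂ : Set (Tube E))))
          (convexHull ℝ (zvec '' (T₂ : Set (Tube E))))) := by
  classical
  refine ⟨?_, ?_, ?_⟩
  · intro T hT
    exact ⟨maxTubing_card hE hiso hT, zvec_affineIndep hE hiso hT⟩
  · ext z
    simp only [Set.mem_iUnion, Set.mem_setOf_eq, exists_prop]
    constructor
    · rintro ⟨T, hT, hz⟩
      apply convexHull_mono _ hz
      rintro p ⟨t, -, rfl⟩
      exact ⟨t, rfl⟩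
    · intro hz
      obtain ⟨T, hTmax, hmem⟩ := cover_point hE hiso hz
      exact ⟨T, hTmax, hmem⟩
  · intro T₁ T₂ h1 h2
    refine ⟨inter_hulls_eq hE hiso h1 h2, face_lemma hE hiso h1 h2, ?_⟩
    have hface := face_lemma hE hiso h2 h1
    rwa [Set.inter_comm] at hface
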